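/- arXiv:0904.1118 — 8 statements merged into one kernel-verified Lean document; each statement's English description precedes it below -/
import Mathlib

section
/- For all real t ≠ 0, cosh(t) < (sinh(t)/t)^3. -/
open Real

private lemma pos_of_deriv_pos {f f' : ℝ → ℝ}
    (hd : ∀ x, HasDerivAt f (f' x) x) (h0 : f 0 = 0)
    (hp : ∀ x > (0:ℝ), 0 < f' x) {t : ℝ} (ht : 0 < t) : 0 < f t := by
  have hmono : StrictMonoOn f (Set.Ici 0) := by
    apply strictMonoOn_of_deriv_pos (convex_Ici 0)
      (fun x _ => (hd x).continuousAt.continuousWithinAt)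
    intro x hx
    rw [interior_Ici] at hx
    rw [(hd x).deriv]
    exact hp x hx
  have := hmono (Set.self_mem_Ici) (Set.mem_Ici.2 ht.le) ht
  rwa [h0] at this

private lemma cosh_bound {t : ℝ} (ht : 0 < t) : 1 + t ^ 2 / 2 < Real.cosh t := by
  have h := pos_of_deriv_pos (f := fun x => Real.cosh x - (1 + x ^ 2 / 2))
    (f' := fun x => Real.sinh x - x)
    (fun x => by
      have : HasDerivAt (fun x : ℝ => 1 + x ^ 2 / 2) x x := by
        have := ((hasDerivAt_pow 2 x).div_const 2).const_add 1
        simpa using this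
      exact (Real.hasDerivAt_cosh x).sub this)
    (by simp) (fun x hx => sub_pos.2 (Real.self_lt_sinh_iff.2 hx)) ht
  linarith

private lemma sinh_bound {t : ℝ} (ht : 0 < t) : t + t ^ 3 / 6 < Real.sinh t := by
  have h := pos_of_deriv_pos (f := fun x => Real.sinh x - (x + x ^ 3 / 6))
    (f' := fun x => Real.cosh x - (1 + x ^ 2 / 2))
    (fun x => by
      have h1 : HasDerivAt (fun x : ℝ => x + x ^ 3 / 6) (1 + x ^ 2 / 2) x := by
        have := (hasDerivAt_id x).add ((hasDerivAt_pow 3 x).div_const 6)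
        exact this.congr_deriv (by ring)
      exact (Real.hasDerivAt_sinh x).sub h1)
    (by simp) (fun x hx => sub_pos.2 (cosh_bound hx)) ht
  linarith

private lemma sinh_lt_mul_cosh {t : ℝ} (ht : 0 < t) : Real.sinh t < t * Real.cosh t := by
  have h := pos_of_deriv_pos (f := fun x => x * Real.cosh x - Real.sinh x)
    (f' := fun x => x * Real.sinh x)
    (fun x => by
      have h1 : HasDerivAt (fun x : ℝ => x * Real.cosh x)
          (1 * Real.cosh x + x * Real.sinh x) x :=
        (hasDerivAt_id x).mul (Real.hasDerivAt_cosh x)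
      have := h1.sub (Real.hasDerivAt_sinh x)
      exact this.congr_deriv (by ring))
    (by simp) (fun x hx => mul_pos hx (Real.sinh_pos_iff.2 hx)) ht
  linarith

private lemma key {t : ℝ} (ht : 0 < t) : t ^ 3 * Real.cosh t < Real.sinh t ^ 3 := by
  have h := pos_of_deriv_pos (f := fun x => Real.sinh x ^ 3 - x ^ 3 * Real.cosh x)
    (f' := fun x => 3 * Real.sinh x ^ 2 * Real.cosh x -
      (3 * x ^ 2 * Real.cosh x + x ^ 3 * Real.sinh x))
    (fun x => by
      have h1 : HasDerivAt (fun x : ℝ => Real.sinh x ^ 3)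
          (3 * Real.sinh x ^ 2 * Real.cosh x) x := by
        have := (Real.hasDerivAt_sinh x).pow 3
        exact this.congr_deriv (by ring)
      have h2 : HasDerivAt (fun x : ℝ => x ^ 3 * Real.cosh x)
          (3 * x ^ 2 * Real.cosh x + x ^ 3 * Real.sinh x) x := by
        have := (hasDerivAt_pow 3 x).mul (Real.hasDerivAt_cosh x)
        exact this.congr_deriv (by ring)
      exact h1.sub h2)
    (by simp)
    (fun x hx => by
      have hc : 0 < Real.cosh x := Real.cosh_pos x
      have hs : x < Real.sinh x := Real.self_lt_sinh_iff.2 hx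
      have h1 : x + x ^ 3 / 6 < Real.sinh x := sinh_bound hx
      have h2 : Real.sinh x < x * Real.cosh x := sinh_lt_mul_cosh hx
      -- 3 (sinh^2 - x^2) cosh > x^4 cosh > x^3 sinh
      have hsq : x ^ 2 + x ^ 4 / 3 < Real.sinh x ^ 2 := by
        nlinarith [pow_pos hx 3, pow_pos hx 1]
      have hA : x ^ 4 * Real.cosh x < 3 * (Real.sinh x ^ 2 - x ^ 2) * Real.cosh x := by
        have : x ^ 4 < 3 * (Real.sinh x ^ 2 - x ^ 2) := by nlinarith [pow_pos hx 4]
        nlinarith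
      have hB : x ^ 3 * Real.sinh x < x ^ 4 * Real.cosh x := by
        have := mul_lt_mul_of_pos_left h2 (pow_pos hx 3)
        calc x ^ 3 * Real.sinh x < x ^ 3 * (x * Real.cosh x) := this
          _ = x ^ 4 * Real.cosh x := by ring
      nlinarith) ht
  linarith

theorem lazarevic_inequality (t : ℝ) (ht : t ≠ 0) :
    Real.cosh t < (Real.sinh t / t) ^ 3 := by
  rcases ht.lt_or_gt with h | h
  · have h' : 0 < -t := by linarith
    have := key h'
    rw [Real.sinh_neg, Real.cosh_neg] at this
    have ht3 : t ^ 3 < 0 := Odd.pow_neg (by decide) h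
    rw [div_pow, lt_div_iff_of_neg ht3]
    nlinarith [this]
  · have := key h
    rw [div_pow, lt_div_iff₀ (pow_pos h 3)]
    linarith
end

section
/- For real numbers a < b, define δ_{a,b}(t) = (b·e^{bt} − a·e^{at})/(e^{bt} − e^{at}) − 1/t for t ≠ 0. Then δ_{a,b} is strictly concave on (0, ∞), i.e., its second derivative is negative for all t > 0. -/
open Real

private lemma cascade {f f' : ℝ → ℝ} (hd : ∀ x, HasDerivAt f (f' x) x)
    (h0 : f 0 = 0) (hp : ∀ x > 0, 0 < f' x) : ∀ x > 0, 0 < f x := by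
  intro x hx
  have hmono : StrictMonoOn f (Set.Ici 0) := by
    apply strictMonoOn_of_deriv_pos (convex_Ici 0)
    · exact (Differentiable.continuous (fun y => (hd y).differentiableAt)).continuousOn
    · intro y hy
      rw [interior_Ici] at hy
      rw [(hd y).deriv]
      exact hp y hy
  have := hmono (Set.self_mem_Ici) (Set.mem_Ici.2 hx.le) hx
  rwa [h0] at this

private lemma q7_pos : ∀ x > 0, (0:ℝ) <
    2187 * cosh (3*x) - 843 * cosh x - 504 * x * sinh x - 84 * x^2 * cosh x - 4 * x^3 * sinh x := by
  intro x hx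
  have h1 : cosh x ≤ exp x := by
    rw [cosh_eq]
    nlinarith [exp_pos x, exp_pos (-x), Real.exp_le_exp.2 (by linarith : -x ≤ x)]
  have h2 : sinh x ≤ exp x := by
    rw [sinh_eq]
    nlinarith [exp_pos (-x), exp_pos x]
  have h3 : exp (3*x) / 2 ≤ cosh (3*x) := by
    rw [cosh_eq]
    nlinarith [exp_pos (-(3*x))]
  have h4 : exp (3*x) = exp (2*x) * exp x := by
    rw [← exp_add]; ring_nf
  have h5 : 1 + 2*x + 2*x^2 + (4/3)*x^3 ≤ exp (2*x) := by
    have := Real.sum_le_exp_of_nonneg (by linarith : (0:ℝ) ≤ 2*x) 4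
    simp [Finset.sum_range_succ, Nat.factorial] at this
    nlinarith [this]
  have hex : 0 < exp x := exp_pos x
  nlinarith [mul_pos hex hx, mul_pos (mul_pos hex hx) hx, mul_pos (mul_pos (mul_pos hex hx) hx) hx,
    mul_le_mul_of_nonneg_right h5 hex.le, mul_nonneg (mul_nonneg hx.le hx.le) hx.le]
private noncomputable def Q0 : ℝ → ℝ := fun y => Real.sinh (3*y) - 3 * Real.sinh y - 4 * (y^3 * Real.cosh y)
private noncomputable def Q1 : ℝ → ℝ := fun y => 3 * Real.cosh (3*y) - 3 * Real.cosh y - 12 * (y^2 * Real.cosh y) - 4 * (y^3 * Real.sinh y)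
private noncomputable def Q2 : ℝ → ℝ := fun y => 9 * Real.sinh (3*y) - 3 * Real.sinh y - 24 * (y * Real.cosh y) - 24 * (y^2 * Real.sinh y) - 4 * (y^3 * Real.cosh y)
private noncomputable def Q3 : ℝ → ℝ := fun y => 27 * Real.cosh (3*y) - 27 * Real.cosh y - 72 * (y * Real.sinh y) - 36 * (y^2 * Real.cosh y) - 4 * (y^3 * Real.sinh y)
private noncomputable def Q4 : ℝ → ℝ := fun y => 81 * Real.sinh (3*y) - 99 * Real.sinh y - 144 * (y * Real.cosh y) - 48 * (y^2 * Real.sinh y) - 4 * (y^3 * Real.cosh y)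
private noncomputable def Q5 : ℝ → ℝ := fun y => 243 * Real.cosh (3*y) - 243 * Real.cosh y - 240 * (y * Real.sinh y) - 60 * (y^2 * Real.cosh y) - 4 * (y^3 * Real.sinh y)
private noncomputable def Q6 : ℝ → ℝ := fun y => 729 * Real.sinh (3*y) - 483 * Real.sinh y - 360 * (y * Real.cosh y) - 72 * (y^2 * Real.sinh y) - 4 * (y^3 * Real.cosh y)
private noncomputable def Q7 : ℝ → ℝ := fun y => 2187 * Real.cosh (3*y) - 843 * Real.cosh y - 504 * (y * Real.sinh y) - 84 * (y^2 * Real.cosh y) - 4 * (y^3 * Real.sinh y)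
private lemma dQ0 (x : ℝ) : HasDerivAt Q0 (Q1 x) x := by
  have h3 : HasDerivAt (fun y : ℝ => 3 * y) 3 x := by simpa using (hasDerivAt_id x).const_mul (3:ℝ)
  have hs3 : HasDerivAt (fun y : ℝ => Real.sinh (3*y)) (Real.cosh (3*x) * 3) x :=
    (Real.hasDerivAt_sinh (3*x)).comp x h3
  have hc3 : HasDerivAt (fun y : ℝ => Real.cosh (3*y)) (Real.sinh (3*x) * 3) x :=
    (Real.hasDerivAt_cosh (3*x)).comp x h3
  have h := ((hs3.sub ((Real.hasDerivAt_sinh x).const_mul (3:ℝ))).sub (((hasDerivAt_pow 3 x).mul (Real.hasDerivAt_cosh x)).const_mul (4:ℝ)))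
  unfold Q0 Q1
  refine HasDerivAt.congr_deriv h ?_
  push_cast
  ring
private lemma dQ1 (x : ℝ) : HasDerivAt Q1 (Q2 x) x := by
  have h3 : HasDerivAt (fun y : ℝ => 3 * y) 3 x := by simpa using (hasDerivAt_id x).const_mul (3:ℝ)
  have hs3 : HasDerivAt (fun y : ℝ => Real.sinh (3*y)) (Real.cosh (3*x) * 3) x :=
    (Real.hasDerivAt_sinh (3*x)).comp x h3
  have hc3 : HasDerivAt (fun y : ℝ => Real.cosh (3*y)) (Real.sinh (3*x) * 3) x :=
    (Real.hasDerivAt_cosh (3*x)).comp x h3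
  have h := ((((hc3.const_mul (3:ℝ)).sub ((Real.hasDerivAt_cosh x).const_mul (3:ℝ))).sub (((hasDerivAt_pow 2 x).mul (Real.hasDerivAt_cosh x)).const_mul (12:ℝ))).sub (((hasDerivAt_pow 3 x).mul (Real.hasDerivAt_sinh x)).const_mul (4:ℝ)))
  unfold Q1 Q2
  refine HasDerivAt.congr_deriv h ?_
  push_cast
  ring
private lemma dQ2 (x : ℝ) : HasDerivAt Q2 (Q3 x) x := by
  have h3 : HasDerivAt (fun y : ℝ => 3 * y) 3 x := by simpa using (hasDerivAt_id x).const_mul (3:ℝ)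
  have hs3 : HasDerivAt (fun y : ℝ => Real.sinh (3*y)) (Real.cosh (3*x) * 3) x :=
    (Real.hasDerivAt_sinh (3*x)).comp x h3
  have hc3 : HasDerivAt (fun y : ℝ => Real.cosh (3*y)) (Real.sinh (3*x) * 3) x :=
    (Real.hasDerivAt_cosh (3*x)).comp x h3
  have h := (((((hs3.const_mul (9:ℝ)).sub ((Real.hasDerivAt_sinh x).const_mul (3:ℝ))).sub (((hasDerivAt_id x).mul (Real.hasDerivAt_cosh x)).const_mul (24:ℝ))).sub (((hasDerivAt_pow 2 x).mul (Real.hasDerivAt_sinh x)).const_mul (24:ℝ))).sub (((hasDerivAt_pow 3 x).mul (Real.hasDerivAt_cosh x)).const_mul (4:ℝ)))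
  simp only [id_eq] at h
  unfold Q2 Q3
  refine HasDerivAt.congr_deriv h ?_
  push_cast
  ring
private lemma dQ3 (x : ℝ) : HasDerivAt Q3 (Q4 x) x := by
  have h3 : HasDerivAt (fun y : ℝ => 3 * y) 3 x := by simpa using (hasDerivAt_id x).const_mul (3:ℝ)
  have hs3 : HasDerivAt (fun y : ℝ => Real.sinh (3*y)) (Real.cosh (3*x) * 3) x :=
    (Real.hasDerivAt_sinh (3*x)).comp x h3
  have hc3 : HasDerivAt (fun y : ℝ => Real.cosh (3*y)) (Real.sinh (3*x) * 3) x :=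
    (Real.hasDerivAt_cosh (3*x)).comp x h3
  have h := (((((hc3.const_mul (27:ℝ)).sub ((Real.hasDerivAt_cosh x).const_mul (27:ℝ))).sub (((hasDerivAt_id x).mul (Real.hasDerivAt_sinh x)).const_mul (72:ℝ))).sub (((hasDerivAt_pow 2 x).mul (Real.hasDerivAt_cosh x)).const_mul (36:ℝ))).sub (((hasDerivAt_pow 3 x).mul (Real.hasDerivAt_sinh x)).const_mul (4:ℝ)))
  simp only [id_eq] at h
  unfold Q3 Q4
  refine HasDerivAt.congr_deriv h ?_
  push_cast
  ring
private lemma dQ4 (x : ℝ) : HasDerivAt Q4 (Q5 x) x := by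
  have h3 : HasDerivAt (fun y : ℝ => 3 * y) 3 x := by simpa using (hasDerivAt_id x).const_mul (3:ℝ)
  have hs3 : HasDerivAt (fun y : ℝ => Real.sinh (3*y)) (Real.cosh (3*x) * 3) x :=
    (Real.hasDerivAt_sinh (3*x)).comp x h3
  have hc3 : HasDerivAt (fun y : ℝ => Real.cosh (3*y)) (Real.sinh (3*x) * 3) x :=
    (Real.hasDerivAt_cosh (3*x)).comp x h3
  have h := (((((hs3.const_mul (81:ℝ)).sub ((Real.hasDerivAt_sinh x).const_mul (99:ℝ))).sub (((hasDerivAt_id x).mul (Real.hasDerivAt_cosh x)).const_mul (144:ℝ))).sub (((hasDerivAt_pow 2 x).mul (Real.hasDerivAt_sinh x)).const_mul (48:ℝ))).sub (((hasDerivAt_pow 3 x).mul (Real.hasDerivAt_cosh x)).const_mul (4:ℝ)))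
  simp only [id_eq] at h
  unfold Q4 Q5
  refine HasDerivAt.congr_deriv h ?_
  push_cast
  ring
private lemma dQ5 (x : ℝ) : HasDerivAt Q5 (Q6 x) x := by
  have h3 : HasDerivAt (fun y : ℝ => 3 * y) 3 x := by simpa using (hasDerivAt_id x).const_mul (3:ℝ)
  have hs3 : HasDerivAt (fun y : ℝ => Real.sinh (3*y)) (Real.cosh (3*x) * 3) x :=
    (Real.hasDerivAt_sinh (3*x)).comp x h3
  have hc3 : HasDerivAt (fun y : ℝ => Real.cosh (3*y)) (Real.sinh (3*x) * 3) x :=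
    (Real.hasDerivAt_cosh (3*x)).comp x h3
  have h := (((((hc3.const_mul (243:ℝ)).sub ((Real.hasDerivAt_cosh x).const_mul (243:ℝ))).sub (((hasDerivAt_id x).mul (Real.hasDerivAt_sinh x)).const_mul (240:ℝ))).sub (((hasDerivAt_pow 2 x).mul (Real.hasDerivAt_cosh x)).const_mul (60:ℝ))).sub (((hasDerivAt_pow 3 x).mul (Real.hasDerivAt_sinh x)).const_mul (4:ℝ)))
  simp only [id_eq] at h
  unfold Q5 Q6
  refine HasDerivAt.congr_deriv h ?_
  push_cast
  ring
private lemma dQ6 (x : ℝ) : HasDerivAt Q6 (Q7 x) x := by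
  have h3 : HasDerivAt (fun y : ℝ => 3 * y) 3 x := by simpa using (hasDerivAt_id x).const_mul (3:ℝ)
  have hs3 : HasDerivAt (fun y : ℝ => Real.sinh (3*y)) (Real.cosh (3*x) * 3) x :=
    (Real.hasDerivAt_sinh (3*x)).comp x h3
  have hc3 : HasDerivAt (fun y : ℝ => Real.cosh (3*y)) (Real.sinh (3*x) * 3) x :=
    (Real.hasDerivAt_cosh (3*x)).comp x h3
  have h := (((((hs3.const_mul (729:ℝ)).sub ((Real.hasDerivAt_sinh x).const_mul (483:ℝ))).sub (((hasDerivAt_id x).mul (Real.hasDerivAt_cosh x)).const_mul (360:ℝ))).sub (((hasDerivAt_pow 2 x).mul (Real.hasDerivAt_sinh x)).const_mul (72:ℝ))).sub (((hasDerivAt_pow 3 x).mul (Real.hasDerivAt_cosh x)).const_mul (4:ℝ)))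
  simp only [id_eq] at h
  unfold Q6 Q7
  refine HasDerivAt.congr_deriv h ?_
  push_cast
  ring

private lemma Q7_pos : ∀ x > 0, 0 < Q7 x := by
  intro x hx
  have h := q7_pos x hx
  unfold Q7
  linarith

private lemma lazarevic {x : ℝ} (hx : 0 < x) : x^3 * Real.cosh x < (Real.sinh x)^3 := by
  have p6 := cascade dQ6 (by norm_num [Q6]) Q7_pos
  have p5 := cascade dQ5 (by norm_num [Q5]) p6
  have p4 := cascade dQ4 (by norm_num [Q4]) p5
  have p3 := cascade dQ3 (by norm_num [Q3]) p4
  have p2 := cascade dQ2 (by norm_num [Q2]) p3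
  have p1 := cascade dQ1 (by norm_num [Q1]) p2
  have p0 := cascade dQ0 (by norm_num [Q0]) p1
  have h := p0 x hx
  have hid : Real.sinh (3*x) = 3 * Real.sinh x + 4 * (Real.sinh x)^3 := by
    have h2 : 3*x = x + (x + x) := by ring
    rw [h2, Real.sinh_add, Real.sinh_add, Real.cosh_add]
    linear_combination (3 * Real.sinh x) * (Real.cosh_sq x)
  unfold Q0 at h
  nlinarith [h, hid]


theorem delta_second_deriv_neg (a b : ℝ) (hab : a < b) (t : ℝ) (ht : 0 < t) :
    deriv (deriv (fun t : ℝ =>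
      (b * Real.exp (b * t) - a * Real.exp (a * t)) /
        (Real.exp (b * t) - Real.exp (a * t)) - 1 / t)) t < 0 := by
  set G : ℝ → ℝ := fun u => (u^2)⁻¹ -
      (b-a)^2 * (Real.exp ((a+b)*u) / (Real.exp (b*u) - Real.exp (a*u))^2) with hG
  have hDpos : ∀ s : ℝ, 0 < s → 0 < Real.exp (b*s) - Real.exp (a*s) := by
    intro s hs
    have : a*s < b*s := by nlinarith
    simpa using Real.exp_lt_exp.2 this
  -- step 1: first derivative
  have step1 : ∀ s : ℝ, 0 < s → HasDerivAt (fun u : ℝ =>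
      (b * Real.exp (b * u) - a * Real.exp (a * u)) /
        (Real.exp (b * u) - Real.exp (a * u)) - 1 / u) (G s) s := by
    intro s hs
    have hDne : Real.exp (b*s) - Real.exp (a*s) ≠ 0 := (hDpos s hs).ne'
    have hb : HasDerivAt (fun u : ℝ => Real.exp (b*u)) (Real.exp (b*s) * b) s := by
      have := (Real.hasDerivAt_exp (b*s)).comp s ((hasDerivAt_id s).const_mul b)
      simpa [Function.comp_def, id_eq, mul_comm] using this
    have ha : HasDerivAt (fun u : ℝ => Real.exp (a*u)) (Real.exp (a*s) * a) s := by
      have := (Real.hasDerivAt_exp (a*s)).comp s ((hasDerivAt_id s).const_mul a)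
      simpa [Function.comp_def, id_eq, mul_comm] using this
    have hN := (hb.const_mul b).sub (ha.const_mul a)
    have hDd := hb.sub ha
    have hdiv := hN.div hDd hDne
    have hinv : HasDerivAt (fun u : ℝ => 1/u) (-(s^2)⁻¹) s := by
      simpa [one_div] using hasDerivAt_inv hs.ne'
    have h := hdiv.sub hinv
    refine HasDerivAt.congr_deriv h ?_
    have hexp : Real.exp ((a+b)*s) = Real.exp (b*s) * Real.exp (a*s) := by
      rw [← Real.exp_add]; ring_nf
    rw [hG]
    simp only
    rw [hexp]
    simp only [Pi.sub_apply, Pi.pow_apply]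
    field_simp
    ring
  -- step 2: replace inner deriv by G near t
  have hev : deriv (fun t : ℝ =>
      (b * Real.exp (b * t) - a * Real.exp (a * t)) /
        (Real.exp (b * t) - Real.exp (a * t)) - 1 / t) =ᶠ[nhds t] G :=
    Filter.eventuallyEq_of_mem (Ioi_mem_nhds ht) (fun s hs => ((step1 s hs).deriv))
  rw [hev.deriv_eq]
  -- step 3: derivative of G
  have hDne : Real.exp (b*t) - Real.exp (a*t) ≠ 0 := (hDpos t ht).ne'
  have hb : HasDerivAt (fun u : ℝ => Real.exp (b*u)) (Real.exp (b*t) * b) t := by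
    have := (Real.hasDerivAt_exp (b*t)).comp t ((hasDerivAt_id t).const_mul b)
    simpa [Function.comp_def, id_eq, mul_comm] using this
  have ha : HasDerivAt (fun u : ℝ => Real.exp (a*u)) (Real.exp (a*t) * a) t := by
    have := (Real.hasDerivAt_exp (a*t)).comp t ((hasDerivAt_id t).const_mul a)
    simpa [Function.comp_def, id_eq, mul_comm] using this
  have hab' : HasDerivAt (fun u : ℝ => Real.exp ((a+b)*u)) (Real.exp ((a+b)*t) * (a+b)) t := by
    have := (Real.hasDerivAt_exp ((a+b)*t)).comp t ((hasDerivAt_id t).const_mul (a+b))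
    simpa [Function.comp_def, id_eq, mul_comm] using this
  have hDd := hb.sub ha
  have hden := hDd.pow 2
  have hfrac := hab'.div hden (pow_ne_zero 2 hDne)
  have hsq : HasDerivAt (fun u : ℝ => (u^2)⁻¹) (-(2*t) / (t^2)^2) t := by
    have hp : HasDerivAt (fun u : ℝ => u^2) (2*t) t := by
      simpa using hasDerivAt_pow 2 t
    exact hp.inv (pow_ne_zero 2 ht.ne')
  have hG' := hsq.sub (hfrac.const_mul ((b-a)^2))
  have hGd : HasDerivAt G
      ((b-a)^3 * Real.exp ((a+b)*t) * (Real.exp (b*t) + Real.exp (a*t)) /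
        (Real.exp (b*t) - Real.exp (a*t))^3 - 2/t^3) t := by
    refine HasDerivAt.congr_deriv hG' ?_
    have hexp : Real.exp ((a+b)*t) = Real.exp (b*t) * Real.exp (a*t) := by
      rw [← Real.exp_add]; ring_nf
    rw [hexp]
    simp only [Pi.sub_apply, Pi.pow_apply, Nat.cast_ofNat, Nat.reduceSub, pow_one]
    field_simp
    ring
  rw [hGd.deriv]
  -- step 4: negativity
  set x := (b-a)*t/2 with hxdef
  have hx : 0 < x := by have hba : 0 < b - a := sub_pos.2 hab; rw [hxdef]; nlinarith
  set E := Real.exp ((a+b)*t/2) with hE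
  set P := Real.exp x with hP
  set Pm := Real.exp (-x) with hPm
  have heb : Real.exp (b*t) = E * P := by
    rw [hE, hP, hxdef, ← Real.exp_add]; ring_nf
  have hea : Real.exp (a*t) = E * Pm := by
    rw [hE, hPm, hxdef, ← Real.exp_add]; ring_nf
  have hEP : Real.exp ((a+b)*t) = E^2 := by
    rw [hE, pow_two, ← Real.exp_add]; ring_nf
  have key := lazarevic hx
  rw [Real.cosh_eq, Real.sinh_eq] at key
  have key2 : 8*x^3*(P+Pm) < 2*(P-Pm)^3 := by nlinarith [key]
  have hEpos : 0 < E := Real.exp_pos _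
  have hPPm : Pm < P := Real.exp_lt_exp.2 (by linarith)
  have h8 : (b-a)^3 * t^3 = 8*x^3 := by rw [hxdef]; ring
  rw [sub_neg, div_lt_div_iff₀ (pow_pos (hDpos t ht) 3) (by positivity)]
  rw [heb, hea, hEP]
  have e1 : (b-a)^3 * E^2 * (E*P + E*Pm) * t^3 = E^3 * (8*x^3*(P+Pm)) := by
    linear_combination (E^3*(P+Pm)) * h8
  have e2 : 2*(E*P - E*Pm)^3 = E^3 * (2*(P-Pm)^3) := by ring
  calc (b-a)^3 * E^2 * (E*P + E*Pm) * t^3 = E^3 * (8*x^3*(P+Pm)) := e1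
    _ < E^3 * (2*(P-Pm)^3) := by
        exact mul_lt_mul_of_pos_left key2 (by positivity)
    _ = 2*(E*P - E*Pm)^3 := e2.symm
end

section
/- For real numbers a < b, the function δ_{a,b}(t) = (b·e^{bt} − a·e^{at})/(e^{bt} − e^{at}) − 1/t is strictly convex on (−∞, 0). -/
open Real Set

private lemma pos_of_hasDerivAt (F G : ℝ → ℝ) (hd : ∀ y, HasDerivAt F (G y) y)
    (h0 : F 0 = 0) (hG : ∀ y, 0 < y → 0 < G y) : ∀ y, 0 < y → 0 < F y := by
  intro y hy
  have hmono : StrictMonoOn F (Set.Ici 0) := by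
    apply strictMonoOn_of_deriv_pos (convex_Ici 0)
    · exact fun x _ => ((hd x).continuousAt).continuousWithinAt
    · intro x hx
      rw [interior_Ici] at hx
      rw [(hd x).deriv]
      exact hG x hx
  have := hmono Set.self_mem_Ici (Set.mem_Ici.mpr hy.le) hy
  rwa [h0] at this

private noncomputable def KK (A p0 p1 p2 p3 q0 q1 q2 q3 C y : ℝ) : ℝ :=
  A * Real.exp (3*y) + (p0 + p1*y + p2*y^2 + p3*y^3) * Real.exp (2*y)
    + (q0 + q1*y + q2*y^2 + q3*y^3) * Real.exp y + C

private lemma hasDerivAt_KK (A p0 p1 p2 p3 q0 q1 q2 q3 C y : ℝ) :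
    HasDerivAt (KK A p0 p1 p2 p3 q0 q1 q2 q3 C)
      (KK (3*A) (2*p0+p1) (2*p1+2*p2) (2*p2+3*p3) (2*p3)
        (q0+q1) (q1+2*q2) (q2+3*q3) q3 0 y) y := by
  have h3 : HasDerivAt (fun y : ℝ => Real.exp (3*y)) (Real.exp (3*y) * 3) y := by
    simpa using ((hasDerivAt_id y).const_mul 3).exp
  have h2 : HasDerivAt (fun y : ℝ => Real.exp (2*y)) (Real.exp (2*y) * 2) y := by
    simpa using ((hasDerivAt_id y).const_mul 2).exp
  have h1 : HasDerivAt Real.exp (Real.exp y) y := Real.hasDerivAt_exp y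
  have hp : HasDerivAt (fun y : ℝ => p0 + p1*y + p2*y^2 + p3*y^3)
      (p1 + p2*(2*y) + p3*(3*y^2)) y := by
    have := (((hasDerivAt_const y p0).add ((hasDerivAt_id y).const_mul p1)).add
      ((hasDerivAt_pow 2 y).const_mul p2)).add ((hasDerivAt_pow 3 y).const_mul p3)
    refine this.congr_deriv ?_
    push_cast
    ring
  have hq : HasDerivAt (fun y : ℝ => q0 + q1*y + q2*y^2 + q3*y^3)
      (q1 + q2*(2*y) + q3*(3*y^2)) y := by
    have := (((hasDerivAt_const y q0).add ((hasDerivAt_id y).const_mul q1)).add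
      ((hasDerivAt_pow 2 y).const_mul q2)).add ((hasDerivAt_pow 3 y).const_mul q3)
    refine this.congr_deriv ?_
    push_cast
    ring
  have := (((h3.const_mul A).add (hp.mul h2)).add (hq.mul h1)).add (hasDerivAt_const y C)
  refine this.congr_deriv ?_
  simp only [KK]
  ring

private lemma cubic_le_exp {y : ℝ} (hy : 0 ≤ y) : 1 + y + y^2/2 + y^3/6 ≤ Real.exp y := by
  have h := Real.sum_le_exp_of_nonneg hy 4
  simp [Finset.sum_range_succ, Nat.factorial] at h
  linarith

private lemma K7_pos : ∀ y, 0 < y →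
    0 < KK 4374 (-4128) (-4032) (-1344) (-128) (-204) (-126) (-21) (-1) 0 y := by
  intro y hy
  have hE1 : 1 ≤ Real.exp y := Real.one_le_exp hy.le
  have hc : 1 + y + y^2/2 + y^3/6 ≤ Real.exp y := cubic_le_exp hy.le
  have e3 : Real.exp (3*y) = Real.exp y ^ 3 := by
    rw [show (3:ℝ)*y = y+y+y by ring, Real.exp_add, Real.exp_add]; ring
  have e2 : Real.exp (2*y) = Real.exp y ^ 2 := by
    rw [show (2:ℝ)*y = y+y by ring, Real.exp_add]; ring
  simp only [KK, e3, e2]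
  set E := Real.exp y with hE
  have hEpos : 0 < E := Real.exp_pos y
  nlinarith [mul_pos hEpos hEpos,
    mul_le_mul_of_nonneg_left hc (le_of_lt (mul_pos hEpos hEpos)),
    mul_le_mul_of_nonneg_right hE1 (le_of_lt (mul_pos hEpos hEpos)),
    mul_nonneg (mul_nonneg hEpos.le hEpos.le) hy.le,
    mul_nonneg (sub_nonneg.mpr hE1) (mul_nonneg hEpos.le (by positivity : (0:ℝ) ≤ y^3+21*y^2+126*y+204))]

private lemma KK_step (A p0 p1 p2 p3 q0 q1 q2 q3 C A' p0' p1' p2' p3' q0' q1' q2' q3' : ℝ)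
    (h0 : A + p0 + q0 + C = 0)
    (hA : A' = 3*A) (hp0 : p0' = 2*p0+p1) (hp1 : p1' = 2*p1+2*p2) (hp2 : p2' = 2*p2+3*p3)
    (hp3 : p3' = 2*p3) (hq0 : q0' = q0+q1) (hq1 : q1' = q1+2*q2) (hq2 : q2' = q2+3*q3)
    (hq3 : q3' = q3)
    (hnext : ∀ y, 0 < y → 0 < KK A' p0' p1' p2' p3' q0' q1' q2' q3' 0 y) :
    ∀ y, 0 < y → 0 < KK A p0 p1 p2 p3 q0 q1 q2 q3 C y := by
  refine pos_of_hasDerivAt _ (KK A' p0' p1' p2' p3' q0' q1' q2' q3' 0) ?_ ?_ hnext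
  · intro y
    have h := hasDerivAt_KK A p0 p1 p2 p3 q0 q1 q2 q3 C y
    rw [hA, hp0, hp1, hp2, hp3, hq0, hq1, hq2, hq3]
    exact h
  · simp only [KK]
    norm_num
    linarith

private lemma K0_pos : ∀ y, 0 < y →
    0 < KK 2 (-6) 0 0 (-1) 6 0 0 (-1) (-2) y := by
  have k7 := K7_pos
  have k6 : ∀ y, 0 < y → 0 < KK 1458 (-1344) (-1440) (-576) (-64) (-114) (-90) (-18) (-1) 0 y :=
    KK_step 1458 (-1344) (-1440) (-576) (-64) (-114) (-90) (-18) (-1) 0 4374 (-4128) (-4032) (-1344) (-128) (-204) (-126) (-21) (-1) (by norm_num) (by norm_num) (by norm_num) (by norm_num) (by norm_num) (by norm_num) (by norm_num) (by norm_num) (by norm_num) (by norm_num) k7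
  have k5 : ∀ y, 0 < y → 0 < KK 486 (-432) (-480) (-240) (-32) (-54) (-60) (-15) (-1) 0 y :=
    KK_step 486 (-432) (-480) (-240) (-32) (-54) (-60) (-15) (-1) 0 1458 (-1344) (-1440) (-576) (-64) (-114) (-90) (-18) (-1) (by norm_num) (by norm_num) (by norm_num) (by norm_num) (by norm_num) (by norm_num) (by norm_num) (by norm_num) (by norm_num) (by norm_num) k6
  have k4 : ∀ y, 0 < y → 0 < KK 162 (-144) (-144) (-96) (-16) (-18) (-36) (-12) (-1) 0 y :=
    KK_step 162 (-144) (-144) (-96) (-16) (-18) (-36) (-12) (-1) 0 486 (-432) (-480) (-240) (-32) (-54) (-60) (-15) (-1) (by norm_num) (by norm_num) (by norm_num) (by norm_num) (by norm_num) (by norm_num) (by norm_num) (by norm_num) (by norm_num) (by norm_num) k5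
  have k3 : ∀ y, 0 < y → 0 < KK 54 (-54) (-36) (-36) (-8) 0 (-18) (-9) (-1) 0 y :=
    KK_step 54 (-54) (-36) (-36) (-8) 0 (-18) (-9) (-1) 0 162 (-144) (-144) (-96) (-16) (-18) (-36) (-12) (-1) (by norm_num) (by norm_num) (by norm_num) (by norm_num) (by norm_num) (by norm_num) (by norm_num) (by norm_num) (by norm_num) (by norm_num) k4
  have k2 : ∀ y, 0 < y → 0 < KK 18 (-24) (-6) (-12) (-4) 6 (-6) (-6) (-1) 0 y :=
    KK_step 18 (-24) (-6) (-12) (-4) 6 (-6) (-6) (-1) 0 54 (-54) (-36) (-36) (-8) 0 (-18) (-9) (-1) (by norm_num) (by norm_num) (by norm_num) (by norm_num) (by norm_num) (by norm_num) (by norm_num) (by norm_num) (by norm_num) (by norm_num) k3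
  have k1 : ∀ y, 0 < y → 0 < KK 6 (-12) 0 (-3) (-2) 6 0 (-3) (-1) 0 y :=
    KK_step 6 (-12) 0 (-3) (-2) 6 0 (-3) (-1) 0 18 (-24) (-6) (-12) (-4) 6 (-6) (-6) (-1) (by norm_num) (by norm_num) (by norm_num) (by norm_num) (by norm_num) (by norm_num) (by norm_num) (by norm_num) (by norm_num) (by norm_num) k2
  exact KK_step 2 (-6) 0 0 (-1) 6 0 0 (-1) (-2) 6 (-12) 0 (-3) (-2) 6 0 (-3) (-1) (by norm_num) (by norm_num) (by norm_num) (by norm_num) (by norm_num) (by norm_num) (by norm_num) (by norm_num) (by norm_num) (by norm_num) k1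

private lemma key_ineq {y : ℝ} (hy : 0 < y) :
    y^3 * Real.exp y * (Real.exp y + 1) < 2 * (Real.exp y - 1)^3 := by
  have h := K0_pos y hy
  have e3 : Real.exp (3*y) = Real.exp y ^ 3 := by
    rw [show (3:ℝ)*y = y+y+y by ring, Real.exp_add, Real.exp_add]; ring
  have e2 : Real.exp (2*y) = Real.exp y ^ 2 := by
    rw [show (2:ℝ)*y = y+y by ring, Real.exp_add]; ring
  simp only [KK, e3, e2] at h
  nlinarith [h]

theorem delta_strictConvexOn_neg (a b : ℝ) (hab : a < b) :
    StrictConvexOn ℝ (Set.Iio (0 : ℝ)) (fun t : ℝ =>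
      (b * Real.exp (b * t) - a * Real.exp (a * t)) /
        (Real.exp (b * t) - Real.exp (a * t)) - 1 / t) := by
  set f : ℝ → ℝ := fun t => (b * Real.exp (b * t) - a * Real.exp (a * t)) /
        (Real.exp (b * t) - Real.exp (a * t)) - 1 / t with hf
  set f1 : ℝ → ℝ := fun t => 1/t^2 -
    (b-a)^2 * (Real.exp (a*t) * Real.exp (b*t)) / (Real.exp (b*t) - Real.exp (a*t))^2 with hf1
  set f2 : ℝ → ℝ := fun t => -2/t^3 +
    (b-a)^3 * (Real.exp (a*t) * Real.exp (b*t)) * (Real.exp (a*t) + Real.exp (b*t)) /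
      (Real.exp (b*t) - Real.exp (a*t))^3 with hf2
  have hD : ∀ t : ℝ, t < 0 → Real.exp (b*t) - Real.exp (a*t) < 0 := by
    intro t ht
    have h1 : b*t < a*t := by nlinarith
    have := Real.exp_lt_exp.mpr h1
    linarith
  have hX : ∀ t : ℝ, HasDerivAt (fun t => Real.exp (a*t)) (Real.exp (a*t) * a) t := fun t => by
    simpa using ((hasDerivAt_id t).const_mul a).exp
  have hY : ∀ t : ℝ, HasDerivAt (fun t => Real.exp (b*t)) (Real.exp (b*t) * b) t := fun t => by
    simpa using ((hasDerivAt_id t).const_mul b).exp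
  have hderiv1 : ∀ t : ℝ, t < 0 → HasDerivAt f (f1 t) t := by
    intro t ht
    have hDne : Real.exp (b*t) - Real.exp (a*t) ≠ 0 := (hD t ht).ne
    have htne : t ≠ 0 := ht.ne
    have hN : HasDerivAt (fun t => b * Real.exp (b*t) - a * Real.exp (a*t))
        (b * (Real.exp (b*t) * b) - a * (Real.exp (a*t) * a)) t :=
      ((hY t).const_mul b).sub ((hX t).const_mul a)
    have hDd : HasDerivAt (fun t => Real.exp (b*t) - Real.exp (a*t))
        (Real.exp (b*t) * b - Real.exp (a*t) * a) t := (hY t).sub (hX t)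
    have hq := hN.div hDd hDne
    have hi : HasDerivAt (fun t : ℝ => 1/t) (-(t^2)⁻¹) t := by
      simpa [one_div] using hasDerivAt_inv htne
    have hs := hq.sub hi
    refine hs.congr_deriv ?_
    simp only [hf1]
    field_simp
    ring
  have hderiv2 : ∀ t : ℝ, t < 0 → HasDerivAt f1 (f2 t) t := by
    intro t ht
    have hDne : Real.exp (b*t) - Real.exp (a*t) ≠ 0 := (hD t ht).ne
    have htne : t ≠ 0 := ht.ne
    have h1 : HasDerivAt (fun t : ℝ => 1/t^2) (-(2*t^1) / (t^2)^2) t := by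
      have := (hasDerivAt_pow 2 t).inv (pow_ne_zero 2 htne)
      simp only [one_div, pow_one]
      exact this.congr_deriv (by norm_num)
    have hnum : HasDerivAt (fun t => (b-a)^2 * (Real.exp (a*t) * Real.exp (b*t)))
        ((b-a)^2 * (Real.exp (a*t) * a * Real.exp (b*t) +
          Real.exp (a*t) * (Real.exp (b*t) * b))) t :=
      ((hX t).mul (hY t)).const_mul ((b-a)^2)
    have hden : HasDerivAt (fun t => (Real.exp (b*t) - Real.exp (a*t))^2)
        (2 * (Real.exp (b*t) - Real.exp (a*t))^1 *
          (Real.exp (b*t) * b - Real.exp (a*t) * a)) t := by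
      have := ((hY t).sub (hX t)).pow 2
      simp only [pow_one]
      exact this.congr_deriv (by norm_num)
    have hq := hnum.div hden (pow_ne_zero 2 hDne)
    have hs := h1.sub hq
    refine hs.congr_deriv ?_
    simp only [hf2]
    field_simp
    ring
  apply strictConvexOn_of_deriv2_pos (convex_Iio 0)
  · rw [hf]
    apply ContinuousOn.sub
    · exact (Continuous.continuousOn (by fun_prop)).div
        (Continuous.continuousOn (by fun_prop)) (fun t ht => (hD t ht).ne)
    · exact continuousOn_const.div continuousOn_id (fun t ht => ne_of_lt ht)
  · intro x hx
    rw [interior_Iio] at hx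
    have hx0 : x < 0 := hx
    have hev : deriv f =ᶠ[nhds x] f1 :=
      Filter.eventuallyEq_of_mem (Iio_mem_nhds hx0) (fun t ht => (hderiv1 t ht).deriv)
    have h2 : deriv^[2] f x = f2 x := by
      have hit : deriv^[2] f x = deriv (deriv f) x := rfl
      rw [hit, hev.deriv_eq, (hderiv2 x hx0).deriv]
    rw [h2]
    have hy : 0 < (a-b)*x := by nlinarith
    have hkey := key_ineq hy
    have hXe : Real.exp (a*x) = Real.exp ((a-b)*x) * Real.exp (b*x) := by
      rw [← Real.exp_add]; congr 1; ring
    have hYpos : 0 < Real.exp (b*x) := Real.exp_pos _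
    have htarget : 0 < -2*(Real.exp (b*x) - Real.exp (a*x))^3
        + x^3 * ((b-a)^3 * (Real.exp (a*x)*Real.exp (b*x)) *
          (Real.exp (a*x)+Real.exp (b*x))) := by
      rw [hXe]
      nlinarith [mul_lt_mul_of_pos_left hkey (pow_pos hYpos 3)]
    have hxx3 : x^3 < 0 := Odd.pow_neg ⟨1, by norm_num⟩ hx0
    have hD3 : (Real.exp (b*x) - Real.exp (a*x))^3 < 0 :=
      Odd.pow_neg ⟨1, by norm_num⟩ (hD x hx0)
    have hprod : 0 < x^3 * (Real.exp (b*x) - Real.exp (a*x))^3 :=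
      mul_pos_of_neg_of_neg hxx3 hD3
    have hmain : 0 < (x^3 * (Real.exp (b*x) - Real.exp (a*x))^3) * f2 x := by
      have hDne : Real.exp (b*x) - Real.exp (a*x) ≠ 0 := (hD x hx0).ne
      have hxne : x ≠ 0 := hx0.ne
      have hexpand : (x^3 * (Real.exp (b*x) - Real.exp (a*x))^3) * f2 x =
          -2*(Real.exp (b*x) - Real.exp (a*x))^3
          + x^3 * ((b-a)^3 * (Real.exp (a*x)*Real.exp (b*x)) *
            (Real.exp (a*x)+Real.exp (b*x))) := by
        simp only [hf2]
        have hD3ne : (Real.exp (b*x) - Real.exp (a*x))^3 ≠ 0 := pow_ne_zero 3 hDne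
        have hx3ne : x^3 ≠ 0 := pow_ne_zero 3 hxne
        rw [mul_add, div_eq_mul_inv, div_eq_mul_inv]
        have e1 : x^3 * (x^3)⁻¹ = 1 := mul_inv_cancel₀ hx3ne
        have e2 : (Real.exp (b*x) - Real.exp (a*x))^3 * ((Real.exp (b*x) - Real.exp (a*x))^3)⁻¹ = 1 :=
          mul_inv_cancel₀ hD3ne
        linear_combination (-2*(Real.exp (b*x) - Real.exp (a*x))^3) * e1
          + (x^3 * ((b-a)^3 * (Real.exp (a*x)*Real.exp (b*x)) * (Real.exp (a*x)+Real.exp (b*x)))) * e2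
      rw [hexpand]
      exact htarget
    exact lt_of_mul_lt_mul_left (by simpa using hmain) hprod.le
end

section
/- For real numbers a < b and any 0 < τ < 1, the inequality δ_{a,b}(τt) < δ_{a,b}(t) holds for all t > 0. -/
open Real

lemma sq_ineq_aux (s : ℝ) (hs : 0 < s) : s ^ 2 * Real.exp s < (Real.exp s - 1) ^ 2 := by
  have h1 : s < 2 * Real.sinh (s / 2) := by
    have := Real.self_lt_sinh_iff.mpr (by linarith : 0 < s / 2)
    linarith
  have e1 : Real.exp (s / 2) * Real.exp (s / 2) = Real.exp s := by
    rw [← Real.exp_add]; norm_num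
  have e2 : Real.exp (s / 2) * Real.exp (-(s / 2)) = 1 := by
    rw [← Real.exp_add]; norm_num
  have h2 : Real.exp s - 1 = Real.exp (s / 2) * (2 * Real.sinh (s / 2)) := by
    rw [Real.sinh_eq]
    linear_combination e2 - e1
  have hes : Real.exp s = Real.exp (s / 2) ^ 2 := by rw [sq]; exact e1.symm
  have hsinh : 0 < 2 * Real.sinh (s / 2) := lt_trans hs h1
  have hsq : s ^ 2 < (2 * Real.sinh (s / 2)) ^ 2 := by nlinarith
  rw [h2, hes]
  have hp : (0:ℝ) < Real.exp (s / 2) ^ 2 := by positivity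
  nlinarith [mul_lt_mul_of_pos_right hsq hp]

lemma psi_hasDeriv (s : ℝ) (hs : 0 < s) :
    HasDerivAt (fun s : ℝ => (Real.exp s - 1)⁻¹ - s⁻¹)
      (-(Real.exp s) / (Real.exp s - 1) ^ 2 + (s ^ 2)⁻¹) s := by
  have h1 : (1 : ℝ) < Real.exp s := by
    have := Real.add_one_lt_exp hs.ne'
    linarith
  have hne : Real.exp s - 1 ≠ 0 := by linarith
  have d1 : HasDerivAt (fun s : ℝ => Real.exp s - 1) (Real.exp s) s :=
    (Real.hasDerivAt_exp s).sub_const 1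
  have d2 : HasDerivAt (fun s : ℝ => (Real.exp s - 1)⁻¹)
      (-(Real.exp s) / (Real.exp s - 1) ^ 2) s := d1.inv hne
  have d3 : HasDerivAt (fun s : ℝ => s⁻¹) (-(s ^ 2)⁻¹) s := hasDerivAt_inv hs.ne'
  have : HasDerivAt (fun s : ℝ => (Real.exp s - 1)⁻¹ - s⁻¹)
      (-(Real.exp s) / (Real.exp s - 1) ^ 2 - -(s ^ 2)⁻¹) s := d2.sub d3
  convert this using 1
  ring

lemma psi_strictMono : StrictMonoOn (fun s : ℝ => (Real.exp s - 1)⁻¹ - s⁻¹) (Set.Ioi 0) := by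
  apply strictMonoOn_of_deriv_pos (convex_Ioi 0)
  · intro x hx
    exact (psi_hasDeriv x hx).differentiableAt.continuousAt.continuousWithinAt
  · intro x hx
    rw [interior_Ioi] at hx
    have hx0 : 0 < x := hx
    rw [(psi_hasDeriv x hx0).deriv]
    have h1 : (1 : ℝ) < Real.exp x := by
      have := Real.add_one_lt_exp hx0.ne'
      linarith
    have key := sq_ineq_aux x hx0
    have h2 : Real.exp x / (Real.exp x - 1) ^ 2 < (x ^ 2)⁻¹ := by
      rw [div_lt_iff₀ (pow_pos (by linarith) 2), inv_mul_eq_div,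
        lt_div_iff₀ (by positivity)]
      nlinarith
    have h3 : -(Real.exp x) / (Real.exp x - 1) ^ 2
        = -(Real.exp x / (Real.exp x - 1) ^ 2) := by ring
    rw [h3]
    linarith

lemma delta_eq (a b t : ℝ) (hab : a < b) (ht : 0 < t) :
    (b * Real.exp (b * t) - a * Real.exp (a * t)) /
        (Real.exp (b * t) - Real.exp (a * t)) - 1 / t =
      b + (b - a) * ((Real.exp ((b - a) * t) - 1)⁻¹ - ((b - a) * t)⁻¹) := by
  have hE : Real.exp (b * t) = Real.exp (a * t) * Real.exp ((b - a) * t) := by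
    rw [← Real.exp_add]; ring_nf
  have hc : 0 < (b - a) * t := by
    have : 0 < b - a := by linarith
    positivity
  have hFpos : (1 : ℝ) < Real.exp ((b - a) * t) := by
    have := Real.add_one_lt_exp hc.ne'
    linarith
  rw [hE]
  set E := Real.exp (a * t) with hE'
  set F := Real.exp ((b - a) * t) with hF'
  have hEpos : 0 < E := Real.exp_pos _
  have hF1 : F - 1 ≠ 0 := by linarith
  have hden : E * F - E ≠ 0 := by
    have : E * F - E = E * (F - 1) := by ring
    rw [this]
    exact mul_ne_zero hEpos.ne' hF1
  have hba : b - a ≠ 0 := by linarith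
  field_simp
  ring

theorem delta_scale_lt (a b : ℝ) (hab : a < b) (τ : ℝ) (hτ0 : 0 < τ) (hτ1 : τ < 1)
    (t : ℝ) (ht : 0 < t) :
    (b * Real.exp (b * (τ * t)) - a * Real.exp (a * (τ * t))) /
        (Real.exp (b * (τ * t)) - Real.exp (a * (τ * t))) - 1 / (τ * t) <
      (b * Real.exp (b * t) - a * Real.exp (a * t)) /
        (Real.exp (b * t) - Real.exp (a * t)) - 1 / t := by
  have hτt : 0 < τ * t := mul_pos hτ0 ht
  rw [delta_eq a b (τ * t) hab hτt, delta_eq a b t hab ht]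
  have hc : 0 < b - a := by linarith
  have hlt : (b - a) * (τ * t) < (b - a) * t := by
    have : τ * t < t := by nlinarith
    exact (mul_lt_mul_iff_right₀ hc).mpr this
  have h1 : (0:ℝ) < (b - a) * (τ * t) := by positivity
  have h2 : (0:ℝ) < (b - a) * t := by positivity
  have key := psi_strictMono (Set.mem_Ioi.mpr h1) (Set.mem_Ioi.mpr h2) hlt
  simp only at key
  have h3 := (mul_lt_mul_iff_right₀ hc).mpr key
  linarith
end

section
/- For real numbers a < b, the limit of δ'_{a,b}(t) as t → 0⁺ equals (a − b)^2/12, where δ'_{a,b}(t) = 1/t^2 − (a−b)^2·e^{(a+b)t}/(e^{at} − e^{bt})^2. -/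
open Filter Real Set

lemma sinh_div_tendsto : Tendsto (fun u : ℝ => Real.sinh u / u) (nhdsWithin 0 (Set.Ioi 0)) (nhds 1) := by
  have h := (Real.hasDerivAt_sinh 0)
  rw [Real.cosh_zero] at h
  have := hasDerivAt_iff_tendsto_slope.mp h
  refine (this.mono_left (nhdsWithin_mono _ ?_)).congr ?_
  · intro x hx; exact ne_of_gt hx
  · intro x; simp [slope, Real.sinh_zero, div_eq_inv_mul]

lemma cosh_sub_one_div : Tendsto (fun u : ℝ => (Real.cosh u - 1) / (3 * u ^ 2))
    (nhdsWithin 0 (Set.Ioi 0)) (nhds (1/6)) := by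
  apply HasDerivAt.lhopital_zero_nhdsGT (f' := fun u => Real.sinh u) (g' := fun u => 6 * u)
  · filter_upwards with u
    exact ((Real.hasDerivAt_cosh u).sub_const 1)
  · filter_upwards with u
    have : HasDerivAt (fun u : ℝ => 3 * u ^ 2) (3 * (2 * u)) u := by
      simpa using ((hasDerivAt_pow 2 u).const_mul 3)
    convert this using 1; ring
  · filter_upwards [self_mem_nhdsWithin] with u hu
    have : (0:ℝ) < u := hu
    positivity
  · have : Tendsto (fun u : ℝ => Real.cosh u - 1) (nhdsWithin 0 (Set.Ioi 0)) (nhds (Real.cosh 0 - 1)) :=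
      ((Real.continuous_cosh.continuousAt).sub continuousAt_const).continuousWithinAt.tendsto
    simpa using this
  · have : Tendsto (fun u : ℝ => 3 * u ^ 2) (nhdsWithin 0 (Set.Ioi 0)) (nhds (3 * 0 ^ 2)) :=
      (continuousAt_const.mul (continuousAt_pow _ _)).continuousWithinAt.tendsto
    simpa using this
  · have : Tendsto (fun u : ℝ => (Real.sinh u / u) / 6) (nhdsWithin 0 (Set.Ioi 0)) (nhds (1/6)) :=
      sinh_div_tendsto.div_const 6
    refine this.congr fun u => ?_
    rw [div_div]; ring_nf

lemma sinh_sub_div_cube : Tendsto (fun u : ℝ => (Real.sinh u - u) / u ^ 3)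
    (nhdsWithin 0 (Set.Ioi 0)) (nhds (1/6)) := by
  apply HasDerivAt.lhopital_zero_nhdsGT (f' := fun u => Real.cosh u - 1)
    (g' := fun u => 3 * u ^ 2)
  · filter_upwards with u
    exact ((Real.hasDerivAt_sinh u).sub (hasDerivAt_id' u))
  · filter_upwards with u
    simpa using (hasDerivAt_pow 3 u)
  · filter_upwards [self_mem_nhdsWithin] with u hu
    have : (0:ℝ) < u := hu
    positivity
  · have : Tendsto (fun u : ℝ => Real.sinh u - u) (nhdsWithin 0 (Set.Ioi 0)) (nhds (Real.sinh 0 - 0)) :=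
      ((Real.continuous_sinh.continuousAt).sub continuousAt_id).continuousWithinAt.tendsto
    simpa using this
  · have : Tendsto (fun u : ℝ => u ^ 3) (nhdsWithin 0 (Set.Ioi 0)) (nhds ((0:ℝ) ^ 3)) :=
      (continuousAt_pow _ _).continuousWithinAt.tendsto
    simpa using this
  · exact cosh_sub_one_div

lemma key_limit : Tendsto (fun u : ℝ => 1 / u ^ 2 - 1 / Real.sinh u ^ 2)
    (nhdsWithin 0 (Set.Ioi 0)) (nhds (1/3)) := by
  have hinv : Tendsto (fun u : ℝ => u / Real.sinh u) (nhdsWithin 0 (Set.Ioi 0)) (nhds 1) := by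
    have := sinh_div_tendsto.inv₀ (by norm_num)
    norm_num at this; exact this
  have hsq : Tendsto (fun u : ℝ => (u / Real.sinh u) ^ 2) (nhdsWithin 0 (Set.Ioi 0)) (nhds 1) := by
    simpa using hinv.pow 2
  have hplus : Tendsto (fun u : ℝ => Real.sinh u / u + 1) (nhdsWithin 0 (Set.Ioi 0)) (nhds 2) := by
    have := sinh_div_tendsto.add_const 1
    norm_num at this ⊢; exact this
  have hprod := (sinh_sub_div_cube.mul hplus).mul hsq
  have : (1/6 * 2 * 1 : ℝ) = 1/3 := by norm_num
  rw [this] at hprod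
  refine hprod.congr' ?_
  filter_upwards [self_mem_nhdsWithin] with u hu
  have hu0 : (0:ℝ) < u := hu
  have hs : 0 < Real.sinh u := Real.sinh_pos_iff.mpr hu0
  field_simp
  ring

theorem delta_deriv_tendsto_zero_right (a b : ℝ) (hab : a < b) :
    Filter.Tendsto (fun t : ℝ =>
      1 / t ^ 2 - (a - b) ^ 2 * Real.exp ((a + b) * t) /
        (Real.exp (a * t) - Real.exp (b * t)) ^ 2)
      (nhdsWithin 0 (Set.Ioi 0)) (nhds ((a - b) ^ 2 / 12)) := by
  set c := b - a with hc
  have hc0 : 0 < c := sub_pos.mpr hab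
  -- the map t ↦ c * t / 2 tends to 0 within Ioi 0
  have hmap : Tendsto (fun t : ℝ => c * t / 2) (nhdsWithin 0 (Set.Ioi 0))
      (nhdsWithin 0 (Set.Ioi 0)) := by
    apply tendsto_nhdsWithin_of_tendsto_nhds_of_eventually_within
    · have : Tendsto (fun t : ℝ => c * t / 2) (nhds 0) (nhds (c * 0 / 2)) :=
        ((continuous_const.mul continuous_id).div_const 2).tendsto 0
      simpa using this.mono_left nhdsWithin_le_nhds
    · filter_upwards [self_mem_nhdsWithin] with t ht
      have : (0:ℝ) < t := ht
      exact mem_Ioi.mpr (by positivity)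
  have hcomp := (key_limit.comp hmap).const_mul (c ^ 2 / 4)
  have heq : (c ^ 2 / 4) * (1/3 : ℝ) = (a - b) ^ 2 / 12 := by
    have : (a - b) ^ 2 = c ^ 2 := by rw [hc]; ring
    rw [this]; ring
  rw [heq] at hcomp
  refine hcomp.congr' ?_
  filter_upwards [self_mem_nhdsWithin] with t ht
  have ht0 : (0:ℝ) < t := ht
  have hu0 : 0 < c * t / 2 := by positivity
  have hs : 0 < Real.sinh (c * t / 2) := Real.sinh_pos_iff.mpr hu0
  have hdiff : Real.exp (a * t) - Real.exp (b * t)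
      = -2 * Real.exp ((a + b) * t / 2) * Real.sinh (c * t / 2) := by
    rw [Real.sinh_eq]
    rw [show a * t = (a+b)*t/2 + (-(c * t / 2)) by rw [hc]; ring,
        show b * t = (a+b)*t/2 + (c * t / 2) by rw [hc]; ring,
        Real.exp_add, Real.exp_add]
    ring
  have hsq : (Real.exp (a * t) - Real.exp (b * t)) ^ 2
      = 4 * Real.exp ((a + b) * t) * Real.sinh (c * t / 2) ^ 2 := by
    rw [hdiff, show (a+b)*t = (a+b)*t/2 + (a+b)*t/2 by ring, Real.exp_add]
    ring
  have hexp : Real.exp ((a + b) * t) ≠ 0 := Real.exp_ne_zero _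
  show _ = _
  simp only [Function.comp]
  rw [hsq]
  have hab2 : (a - b) ^ 2 = c ^ 2 := by rw [hc]; ring
  rw [hab2]
  field_simp
  ring
end

section
/- Let θ(x) = ln Γ(x) − (x − 1/2)ln x + x − (1/2)ln(2π) be the remainder of Binet's first formula. For every x > 0 and λ > 0 with λ ≠ 1, θ(x/(1+λ)) > (1/2)[θ(x/λ) + θ(x)]. -/
open Real Set Filter Topology

namespace ThetaAux

noncomputable def ψ : ℝ → ℝ := deriv (Real.log ∘ Real.Gamma)

lemma diff_f {x : ℝ} (hx : 0 < x) : DifferentiableAt ℝ (Real.log ∘ Real.Gamma) x := by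
  refine (Real.differentiableAt_Gamma ?_).log (Real.Gamma_ne_zero ?_) <;>
    exact fun m => ne_of_gt (by have : (0:ℝ) ≤ (m:ℝ) := Nat.cast_nonneg m; linarith)

lemma f_rec {x : ℝ} (hx : 0 < x) :
    (Real.log ∘ Real.Gamma) (x + 1) = (Real.log ∘ Real.Gamma) x + Real.log x := by
  simp only [Function.comp_apply, Real.Gamma_add_one hx.ne',
    Real.log_mul hx.ne' (Real.Gamma_pos_of_pos hx).ne', add_comm]

lemma ψ_rec {x : ℝ} (hx : 0 < x) : ψ (x + 1) = ψ x + 1 / x := by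
  unfold ψ
  rw [← deriv_comp_add_const, one_div, ← Real.deriv_log,
    ← deriv_add (diff_f hx) (Real.differentiableAt_log hx.ne')]
  apply Filter.EventuallyEq.deriv_eq
  filter_upwards [eventually_gt_nhds hx] using fun y hy => f_rec hy

lemma ψ_le_log {x : ℝ} (hx : 0 < x) : ψ x ≤ Real.log x := by
  have h := Real.convexOn_log_Gamma.deriv_le_slope (Set.mem_Ioi.2 hx)
    (Set.mem_Ioi.2 (by linarith : (0:ℝ) < x + 1)) (lt_add_one x) (diff_f hx)
  rwa [slope_def_field, f_rec hx, add_sub_cancel_left, add_sub_cancel_left, div_one] at h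

lemma log_one_add_lt {t : ℝ} (ht : 0 < t) :
    Real.log (1 + t) < t * (2 + t) / (2 * (1 + t)) := by
  set g : ℝ → ℝ := fun t => t * (2 + t) - 2 * (1 + t) * Real.log (1 + t) with hg
  have hder : ∀ s ∈ Set.Ioi (0:ℝ), HasDerivAt g (2 * s - 2 * Real.log (1 + s)) s := by
    intro s hs
    have h1s : (0:ℝ) < 1 + s := by have := Set.mem_Ioi.1 hs; linarith
    have h1 : HasDerivAt (fun u : ℝ => u * (2 + u)) (2 + 2 * s) s := by
      have := (hasDerivAt_id s).mul ((hasDerivAt_const s (2:ℝ)).add (hasDerivAt_id s))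
      simp only [id_eq, one_mul, zero_add, mul_one] at this
      refine this.congr_deriv ?_
      simp only [Pi.add_apply, id_eq]
      ring
    have h2 : HasDerivAt (fun u : ℝ => Real.log (1 + u)) (1 / (1 + s)) s := by
      have := (Real.hasDerivAt_log h1s.ne').comp s
        (((hasDerivAt_const s (1:ℝ)).add (hasDerivAt_id s)))
      refine this.congr_deriv ?_
      simp [one_div]
    have h3 : HasDerivAt (fun u : ℝ => 2 * (1 + u) * Real.log (1 + u))
        (2 * Real.log (1 + s) + 2) s := by
      have h4 := (((hasDerivAt_const s (2:ℝ)).mul ((hasDerivAt_const s (1:ℝ)).add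
        (hasDerivAt_id s))).mul h2)
      refine h4.congr_deriv ?_
      simp only [Pi.add_apply, Pi.mul_apply, id_eq]
      field_simp
      all_goals ring
    have h5 := h1.sub h3
    refine h5.congr_deriv ?_
    ring
  have hmono : StrictMonoOn g (Set.Ici (0:ℝ)) := by
    apply strictMonoOn_of_deriv_pos (convex_Ici 0)
    · intro s hs
      have h1s : (0:ℝ) < 1 + s := by have := Set.mem_Ici.1 hs; linarith
      exact ((continuousAt_id.mul (continuousAt_const.add continuousAt_id)).sub
        ((continuousAt_const.mul (continuousAt_const.add continuousAt_id)).mul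
          ((continuousAt_const.add continuousAt_id).log h1s.ne'))).continuousWithinAt
    · intro s hs
      rw [interior_Ici] at hs
      have hs' := Set.mem_Ioi.1 hs
      rw [(hder s hs).deriv]
      have : Real.log (1 + s) < s := by
        have := Real.log_lt_sub_one_of_pos (by linarith : (0:ℝ) < 1 + s) (by linarith)
        linarith
      linarith
  have h0 : g 0 = 0 := by simp [hg]
  have := hmono (Set.mem_Ici.2 le_rfl) (Set.mem_Ici.2 ht.le) ht
  rw [h0] at this
  rw [lt_div_iff₀ (by linarith)]
  simp only [hg] at this
  nlinarith [this]

lemma log_succ_lt {x : ℝ} (hx : 0 < x) :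
    Real.log (x + 1) - Real.log x < 1 / (2 * x) + 1 / (2 * (x + 1)) := by
  have ht : (0:ℝ) < 1 / x := by positivity
  have h := log_one_add_lt ht
  have hx1 : (0:ℝ) < x + 1 := by linarith
  have e1 : Real.log (1 + 1 / x) = Real.log (x + 1) - Real.log x := by
    rw [← Real.log_div hx1.ne' hx.ne']
    congr 1
    field_simp
  have e2 : (1 / x) * (2 + 1 / x) / (2 * (1 + 1 / x)) = 1 / (2 * x) + 1 / (2 * (x + 1)) := by
    field_simp
    ring
  rw [e1, e2] at h
  exact h

noncomputable def D : ℝ → ℝ := fun x => Real.log x - 1 / (2 * x) - ψ x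

lemma D_step {x : ℝ} (hx : 0 < x) : D (x + 1) < D x := by
  have h1 := log_succ_lt hx
  have h2 := ψ_rec hx
  unfold D
  rw [h2]
  have hx1 : (0:ℝ) < x + 1 := by linarith
  have : (1:ℝ)/x = 1/(2*x) + 1/(2*x) := by field_simp; ring
  linarith

lemma D_ge_D_add_nat {x : ℝ} (hx : 0 < x) (n : ℕ) : D (x + n) ≤ D x := by
  induction n with
  | zero => simp
  | succ n ih =>
    have hxn : (0:ℝ) < x + n := by positivity
    have hstep := D_step hxn
    push_cast
    refine le_of_lt ?_
    calc D (x + (n + 1)) = D ((x + n) + 1) := by ring_nf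
      _ < D (x + n) := hstep
      _ ≤ D x := ih

lemma D_nonneg {x : ℝ} (hx : 0 < x) : 0 ≤ D x := by
  by_contra h
  push_neg at h
  obtain ⟨n, hn⟩ := exists_nat_gt (1 / (-D x))
  have hxn : (0:ℝ) < x + n := by positivity
  have hlow : -(1 / (2 * (x + n))) ≤ D (x + n) := by
    have := ψ_le_log hxn
    unfold D
    linarith
  have hle := D_ge_D_add_nat hx n
  have hDx : 0 < -D x := by linarith
  have h2 : 1 / (2 * (x + n)) < -D x := by
    rw [div_lt_iff₀ (by positivity)]
    rw [div_lt_iff₀ hDx] at hn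
    nlinarith
  linarith

lemma D_pos {x : ℝ} (hx : 0 < x) : 0 < D x := by
  have h1 := D_step hx
  have h2 := D_nonneg (by linarith : (0:ℝ) < x + 1)
  linarith

noncomputable def θ : ℝ → ℝ := fun y => Real.log (Real.Gamma y) - (y - 1 / 2) * Real.log y + y -
    1 / 2 * Real.log (2 * Real.pi)

lemma θ_hasDeriv {y : ℝ} (hy : 0 < y) :
    HasDerivAt θ (ψ y - Real.log y + 1 / (2 * y)) y := by
  have h1 : HasDerivAt (fun u : ℝ => Real.log (Real.Gamma u)) (ψ y) y := (diff_f hy).hasDerivAt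
  have h2 : HasDerivAt (fun u : ℝ => (u - 1 / 2) * Real.log u)
      (Real.log y + (y - 1 / 2) / y) y := by
    have h2' := ((hasDerivAt_id y).sub (hasDerivAt_const y (1/2:ℝ))).mul
      (Real.hasDerivAt_log hy.ne')
    refine h2'.congr_deriv ?_
    simp only [Pi.sub_apply, id_eq]
    field_simp
    all_goals ring
  have h3 : HasDerivAt θ (ψ y - (Real.log y + (y - 1 / 2) / y) + 1 - 0) y := by
    exact ((h1.sub h2).add (hasDerivAt_id y)).sub (hasDerivAt_const y
      (1 / 2 * Real.log (2 * Real.pi)))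
  convert h3 using 1
  field_simp
  all_goals ring

lemma θ_strictAnti : StrictAntiOn θ (Set.Ioi (0:ℝ)) := by
  apply strictAntiOn_of_deriv_neg (convex_Ioi 0)
  · exact fun y hy => ((θ_hasDeriv (Set.mem_Ioi.1 hy)).continuousAt).continuousWithinAt
  · intro y hy
    rw [interior_Ioi] at hy
    have hy' := Set.mem_Ioi.1 hy
    rw [(θ_hasDeriv hy').deriv]
    have := D_pos hy'
    unfold D at this
    linarith

end ThetaAux

theorem theta_concavity_ineq (x lam : ℝ) (hx : 0 < x) (hlam : 0 < lam) (hne : lam ≠ 1) :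
    (fun y : ℝ => Real.log (Real.Gamma y) - (y - 1 / 2) * Real.log y + y -
        1 / 2 * Real.log (2 * Real.pi)) (x / (1 + lam)) >
      (1 / 2) * ((fun y : ℝ => Real.log (Real.Gamma y) - (y - 1 / 2) * Real.log y + y -
          1 / 2 * Real.log (2 * Real.pi)) (x / lam) +
        (fun y : ℝ => Real.log (Real.Gamma y) - (y - 1 / 2) * Real.log y + y -
          1 / 2 * Real.log (2 * Real.pi)) x) := by
  have h1l : (0:ℝ) < 1 + lam := by linarith
  have ha : (0:ℝ) < x / (1 + lam) := by positivity
  have hb : (0:ℝ) < x / lam := by positivity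
  have hab : x / (1 + lam) < x / lam := div_lt_div_of_pos_left hx hlam (by linarith)
  have hac : x / (1 + lam) < x := by
    rw [div_lt_iff₀ h1l]; nlinarith
  have H1 := ThetaAux.θ_strictAnti (Set.mem_Ioi.2 ha) (Set.mem_Ioi.2 hb) hab
  have H2 := ThetaAux.θ_strictAnti (Set.mem_Ioi.2 ha) (Set.mem_Ioi.2 hx) hac
  unfold ThetaAux.θ at H1 H2
  simp only at H1 H2 ⊢
  linarith
end

section
/- Let θ(x) = ∫₀^∞ (1/(e^t − 1) − 1/t + 1/2)·(e^{−xt}/t) dt be the remainder of Binet's first formula. Then for 0 < p ≤ 1 and q ≤ 1, the function x ↦ θ(px) − q·θ(x) is completely monotonic on (0, ∞), i.e., (−1)^n (d/dx)^n [θ(px) − q·θ(x)] ≥ 0 for all n ≥ 0 and x > 0. -/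
open Real Set MeasureTheory

lemma nonneg_of_hasDerivAt {h h' : ℝ → ℝ} (hd : ∀ t, HasDerivAt h (h' t) t)
    (h0 : h 0 = 0) (hp : ∀ t, 0 ≤ t → 0 ≤ h' t) {t : ℝ} (ht : 0 ≤ t) : 0 ≤ h t := by
  have mono : MonotoneOn h (Ici 0) := by
    refine monotoneOn_of_deriv_nonneg (convex_Ici 0)
      (fun s _ => ((hd s).differentiableAt).continuousAt.continuousWithinAt)
      (fun s _ => ((hd s).differentiableAt).differentiableWithinAt) ?_
    intro s hs
    rw [(hd s).deriv]
    rw [interior_Ici] at hs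
    exact hp s hs.le
  calc (0:ℝ) = h 0 := h0.symm
    _ ≤ h t := mono (self_mem_Ici) ht ht

lemma one_sub_exp_add (s : ℝ) (hs : 0 ≤ s) : 0 ≤ 1 - exp s + s * exp s := by
  refine nonneg_of_hasDerivAt (h := fun u => 1 - exp u + u * exp u)
    (h' := fun u => -exp u + (exp u + u * exp u)) (fun u => ?_) (by simp) (fun u hu => ?_) hs
  · have a1 : HasDerivAt (fun u : ℝ => 1 - exp u) (-exp u) u := (Real.hasDerivAt_exp u).const_sub 1
    have a2 : HasDerivAt (fun u : ℝ => u * exp u) (exp u + u * exp u) u := by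
      have := (hasDerivAt_id u).mul (Real.hasDerivAt_exp u)
      exact this.congr_deriv (by simp only [id]; ring)
    exact a1.add a2
  · show 0 ≤ -exp u + (exp u + u * exp u)
    have : 0 ≤ u * exp u := by positivity
    linarith

/-- key ineq 1 : 2(e^t - 1) ≤ t(e^t+1) for t ≥ 0 -/
lemma ineq1 {t : ℝ} (ht : 0 ≤ t) : 2 * (exp t - 1) ≤ t * (exp t + 1) := by
  have key : 0 ≤ t * (exp t + 1) - 2 * (exp t - 1) := by
    refine nonneg_of_hasDerivAt (h := fun t => t * (exp t + 1) - 2 * (exp t - 1))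
      (h' := fun t => (exp t + 1) + t * exp t - 2 * exp t) (fun s => ?_) (by simp) (fun s hs => ?_) ht
    · have h1 : HasDerivAt (fun t : ℝ => t * (exp t + 1)) ((exp s + 1) + s * exp s) s := by
        have := (hasDerivAt_id s).mul ((Real.hasDerivAt_exp s).add_const 1)
        exact this.congr_deriv (by simp only [id]; ring)
      have h2 : HasDerivAt (fun t : ℝ => 2 * (exp t - 1)) (2 * exp s) s :=
        ((Real.hasDerivAt_exp s).sub_const 1).const_mul 2
      exact h1.sub h2
    · show 0 ≤ (exp s + 1) + s * exp s - 2 * exp s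
      have := one_sub_exp_add s hs
      linarith
  linarith


/-- key ineq 2 : e^{-t/2}(4+2t+t²) ≤ e^{t/2}(4-2t+t²) for t ≥ 0 -/
lemma ineq2 {t : ℝ} (ht : 0 ≤ t) :
    exp (-t/2) * (4 + 2*t + t^2) ≤ exp (t/2) * (4 - 2*t + t^2) := by
  have key : 0 ≤ exp (t/2) * (4 - 2*t + t^2) - exp (-t/2) * (4 + 2*t + t^2) := by
    refine nonneg_of_hasDerivAt (h := fun t => exp (t/2) * (4 - 2*t + t^2) - exp (-t/2) * (4 + 2*t + t^2))
      (h' := fun t => (exp (t/2) * (1/2) * (4 - 2*t + t^2) + exp (t/2) * (-2 + 2*t))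
        - (exp (-t/2) * (-1/2) * (4 + 2*t + t^2) + exp (-t/2) * (2 + 2*t)))
      (fun s => ?_) (by norm_num) (fun s hs => ?_) ht
    · have e1 : HasDerivAt (fun t : ℝ => exp (t/2)) (exp (s/2) * (1/2)) s := by
        have := ((hasDerivAt_id s).div_const 2).exp
        simpa [id] using this
      have e2 : HasDerivAt (fun t : ℝ => exp (-t/2)) (exp (-s/2) * (-1/2)) s := by
        have h : HasDerivAt (fun t : ℝ => -t/2) (-1/2 : ℝ) s := by
          have := ((hasDerivAt_id s).neg).div_const 2
          simpa [id] using this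
        simpa using h.exp
      have p1 : HasDerivAt (fun t : ℝ => 4 - 2*t + t^2) (-2 + 2*s) s := by
        have h := ((hasDerivAt_const s (4:ℝ)).sub ((hasDerivAt_id s).const_mul 2)).add (hasDerivAt_pow 2 s)
        simp only [id_eq] at h
        exact h.congr_deriv (by push_cast; ring)
      have p2 : HasDerivAt (fun t : ℝ => 4 + 2*t + t^2) (2 + 2*s) s := by
        have h := ((hasDerivAt_const s (4:ℝ)).add ((hasDerivAt_id s).const_mul 2)).add (hasDerivAt_pow 2 s)
        simp only [id_eq] at h
        exact h.congr_deriv (by push_cast; ring)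
      exact (e1.mul p1).sub (e2.mul p2)
    · show 0 ≤ (exp (s/2) * (1/2) * (4 - 2*s + s^2) + exp (s/2) * (-2 + 2*s))
        - (exp (-s/2) * (-1/2) * (4 + 2*s + s^2) + exp (-s/2) * (2 + 2*s))
      have hEF : exp (-s/2) ≤ exp (s/2) := exp_le_exp.2 (by linarith)
      have hF : 0 < exp (-s/2) := exp_pos _
      nlinarith [mul_nonneg (sub_nonneg.2 hEF) hs, mul_nonneg (mul_nonneg (exp_pos (s/2)).le hs) hs,
        mul_nonneg (mul_nonneg hF.le hs) hs]
  linarith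

/-- key ineq 3 : t e^{t/2} < e^t - 1 for t > 0 -/
lemma ineq3 {t : ℝ} (ht : 0 < t) : t * exp (t/2) < exp t - 1 := by
  have h := (Real.self_lt_sinh_iff (x := t/2)).2 (by linarith)
  rw [Real.sinh_eq] at h
  have h2 : t < exp (t/2) - exp (-(t/2)) := by linarith
  have hE : 0 < exp (t/2) := exp_pos _
  have hmul : exp (t/2) * exp (t/2) = exp t := by rw [← Real.exp_add]; ring_nf
  have hinv : exp (-(t/2)) * exp (t/2) = 1 := by rw [← Real.exp_add]; simp
  nlinarith


noncomputable def dlt (t : ℝ) : ℝ := 1/(Real.exp t - 1) - 1/t + 1/2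

lemma exp_sub_one_pos {t : ℝ} (ht : 0 < t) : 0 < exp t - 1 := by
  have : (1:ℝ) < exp t := by
    calc (1:ℝ) = exp 0 := Real.exp_zero.symm
    _ < exp t := Real.exp_lt_exp.2 ht
  linarith

lemma dlt_nonneg {t : ℝ} (ht : 0 < t) : 0 ≤ dlt t := by
  have hE := exp_sub_one_pos ht
  have heq : dlt t = (t*(exp t+1) - 2*(exp t-1))/(2*t*(exp t-1)) := by
    unfold dlt; field_simp; ring
  rw [heq]
  exact div_nonneg (by linarith [ineq1 ht.le]) (by positivity)

lemma dlt_le {t : ℝ} (ht : 0 < t) : dlt t ≤ t/4 := by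
  have hE := exp_sub_one_pos ht
  have hkey : 4+2*t+t^2 ≤ exp t * (4-2*t+t^2) := by
    have h := mul_le_mul_of_nonneg_right (ineq2 ht.le) (exp_pos (t/2)).le
    have h1 : exp (t/2) * exp (t/2) = exp t := by rw [← Real.exp_add]; ring_nf
    have h2 : exp (-t/2) * exp (t/2) = 1 := by rw [← Real.exp_add]; ring_nf; exact Real.exp_zero
    nlinarith
  have heq : t/4 - dlt t = (exp t*(4-2*t+t^2) - (4+2*t+t^2))/(4*t*(exp t-1)) := by
    unfold dlt; field_simp; ring
  have : 0 ≤ t/4 - dlt t := by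
    rw [heq]; exact div_nonneg (by linarith) (by positivity)
  linarith

lemma dlt_hasDerivAt {t : ℝ} (ht : 0 < t) :
    HasDerivAt dlt (-exp t/(exp t - 1)^2 + 1/t^2) t := by
  have hE := exp_sub_one_pos ht
  have d1 : HasDerivAt (fun t : ℝ => 1/(exp t - 1)) (-exp t/(exp t - 1)^2) t := by
    have := ((Real.hasDerivAt_exp t).sub_const 1).inv (by linarith)
    simp only [one_div, neg_div]; exact this.congr_deriv (by ring)
  have d2 : HasDerivAt (fun t : ℝ => 1/t) (-(1/t^2)) t := by
    simpa [one_div] using hasDerivAt_inv ht.ne'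
  have := (d1.sub d2).add_const (1/2)
  exact this.congr_deriv (by ring)

lemma dlt_mono : StrictMonoOn dlt (Ioi 0) := by
  refine strictMonoOn_of_deriv_pos (convex_Ioi 0)
    (fun s hs => ((dlt_hasDerivAt hs).differentiableAt).continuousAt.continuousWithinAt) ?_
  intro s hs
  rw [interior_Ioi] at hs
  rw [(dlt_hasDerivAt hs).deriv]
  have hE := exp_sub_one_pos hs
  have h3 := ineq3 hs
  have hs0 : (0:ℝ) < s := hs
  have hA : 0 < s * exp (s/2) := by positivity
  have hsq : (s * exp (s/2))^2 < (exp s - 1)^2 := by nlinarith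
  have h1 : exp (s/2) * exp (s/2) = exp s := by rw [← Real.exp_add]; ring_nf
  have hlt : exp s * s^2 < (exp s - 1)^2 := by nlinarith
  have : exp s/(exp s - 1)^2 < 1/s^2 := by
    rw [div_lt_div_iff₀ (by positivity) (by positivity)]
    nlinarith
  have hdiv : -exp s/(exp s-1)^2 = -(exp s/(exp s-1)^2) := by ring
  rw [hdiv]
  linarith

variable {K : ℝ → ℝ} {C : ℝ}

lemma integrable_pow_exp (m : ℕ) {x : ℝ} (hx : 0 < x) :
    IntegrableOn (fun t : ℝ => t^m * exp (-x*t)) (Ioi 0) := by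
  have h := integrableOn_rpow_mul_exp_neg_mul_rpow (p := 1) (s := (m:ℝ))
    (lt_of_lt_of_le neg_one_lt_zero (Nat.cast_nonneg m)) one_pos hx
  refine h.congr_fun (fun t ht => ?_) measurableSet_Ioi
  simp only [Real.rpow_natCast, Real.rpow_one]

lemma integrable_aux (hK : ContinuousOn K (Ioi 0)) (hC : ∀ t ∈ Ioi (0:ℝ), |K t| ≤ C)
    (m : ℕ) {x : ℝ} (hx : 0 < x) :
    IntegrableOn (fun t => K t * (-t)^m * exp (-x*t)) (Ioi 0) := by
  have base : IntegrableOn (fun t : ℝ => t^m * exp (-x*t)) (Ioi 0) := integrable_pow_exp m hx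
  have meas : AEStronglyMeasurable (fun t => K t * (-t)^m * exp (-x*t))
      (volume.restrict (Ioi 0)) := by
    refine ContinuousOn.aestronglyMeasurable ?_ measurableSet_Ioi
    exact (hK.mul (continuous_pow m |>.comp continuous_neg).continuousOn).mul
      ((continuous_exp.comp (continuous_const.mul continuous_id)).continuousOn)
  refine Integrable.mono' (base.const_mul C) meas ?_
  rw [ae_restrict_iff' measurableSet_Ioi]
  filter_upwards with t ht
  have ht0 : 0 < t := ht
  have h1 : ‖K t * (-t)^m * exp (-x*t)‖ = |K t| * t^m * exp (-x*t) := by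
    rw [norm_eq_abs, abs_mul, abs_mul, abs_pow, abs_neg, abs_of_pos ht0,
      abs_of_pos (exp_pos _)]
  rw [h1]
  have := hC t ht
  have h2 : 0 ≤ t^m * exp (-x*t) := by positivity
  calc |K t| * t^m * exp (-x*t) = |K t| * (t^m * exp (-x*t)) := by ring
    _ ≤ C * (t^m * exp (-x*t)) := mul_le_mul_of_nonneg_right this h2

lemma hasDerivAt_Fn (hK : ContinuousOn K (Ioi 0)) (hC : ∀ t ∈ Ioi (0:ℝ), |K t| ≤ C)
    (n : ℕ) {x : ℝ} (hx : 0 < x) :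
    HasDerivAt (fun y => ∫ t in Ioi (0:ℝ), K t * (-t)^n * exp (-y*t))
      (∫ t in Ioi (0:ℝ), K t * (-t)^(n+1) * exp (-x*t)) x := by
  have hmeas : ∀ (m : ℕ) (y : ℝ), AEStronglyMeasurable (fun t => K t * (-t)^m * exp (-y*t))
      (volume.restrict (Ioi 0)) := fun m y =>
    ((hK.mul (continuous_pow m |>.comp continuous_neg).continuousOn).mul
      ((continuous_exp.comp (continuous_const.mul continuous_id)).continuousOn)).aestronglyMeasurable
      measurableSet_Ioi
  have hbound : ∀ᵐ t ∂(volume.restrict (Ioi (0:ℝ))), ∀ y ∈ Metric.ball x (x/2),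
      ‖K t * (-t)^(n+1) * exp (-y*t)‖ ≤ C * (t^(n+1) * exp (-(x/2)*t)) := by
    rw [ae_restrict_iff' measurableSet_Ioi]
    filter_upwards with t ht y hy
    have ht0 : (0:ℝ) < t := ht
    have hy2 : x/2 ≤ y := by
      rw [Metric.mem_ball, Real.dist_eq, abs_lt] at hy
      linarith [hy.1]
    have hexp : exp (-y*t) ≤ exp (-(x/2)*t) :=
      exp_le_exp.2 (by nlinarith)
    have h1 : ‖K t * (-t)^(n+1) * exp (-y*t)‖ = |K t| * t^(n+1) * exp (-y*t) := by
      rw [norm_eq_abs, abs_mul, abs_mul, abs_pow, abs_neg, abs_of_pos ht0,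
        abs_of_pos (exp_pos _)]
    rw [h1]
    have h3 : |K t| * t^(n+1) * exp (-y*t) ≤ C * t^(n+1) * exp (-(x/2)*t) := by
      have hCt : 0 ≤ C := (abs_nonneg _).trans (hC t ht)
      apply mul_le_mul (mul_le_mul_of_nonneg_right (hC t ht) (by positivity)) hexp
        (exp_pos _).le (by positivity)
    calc |K t| * t^(n+1) * exp (-y*t) ≤ C * t^(n+1) * exp (-(x/2)*t) := h3
      _ = C * (t^(n+1) * exp (-(x/2)*t)) := by ring
  have hdiff : ∀ᵐ t ∂(volume.restrict (Ioi (0:ℝ))), ∀ y ∈ Metric.ball x (x/2),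
      HasDerivAt (fun y => K t * (-t)^n * exp (-y*t)) (K t * (-t)^(n+1) * exp (-y*t)) y := by
    filter_upwards with t y _
    have hE : HasDerivAt (fun y : ℝ => exp (-y*t)) (exp (-y*t) * (-t)) y := by
      have h0 : HasDerivAt (fun y : ℝ => -y*t) (-t) y := by
        have := ((hasDerivAt_id y).neg).mul_const t
        simpa [id] using this
      exact h0.exp
    have := hE.const_mul (K t * (-t)^n)
    exact this.congr_deriv (by ring)
  have key := hasDerivAt_integral_of_dominated_loc_of_deriv_le (μ := volume.restrict (Ioi 0))
    (F := fun y t => K t * (-t)^n * exp (-y*t))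
    (F' := fun y t => K t * (-t)^(n+1) * exp (-y*t))
    (bound := fun t => C * (t^(n+1) * exp (-(x/2)*t)))
    (x₀ := x) (s := Metric.ball x (x/2)) (Metric.ball_mem_nhds x (by positivity))
    (Filter.Eventually.of_forall (hmeas n))
    (integrable_aux hK hC n hx)
    (hmeas (n+1) x) hbound
    ((integrable_pow_exp (n+1) (by linarith : (0:ℝ) < x/2)).const_mul C)
    hdiff
  exact key.2

lemma iteratedDeriv_F0 {K : ℝ → ℝ} {C : ℝ} (hK : ContinuousOn K (Ioi 0))
    (hC : ∀ t ∈ Ioi (0:ℝ), |K t| ≤ C) (n : ℕ) {x : ℝ} (hx : 0 < x) :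
    iteratedDeriv n (fun y => ∫ t in Ioi (0:ℝ), K t * exp (-y*t)) x
      = ∫ t in Ioi (0:ℝ), K t * (-t)^n * exp (-x*t) := by
  induction n generalizing x with
  | zero => simp
  | succ n ih =>
    rw [iteratedDeriv_succ]
    have hev : iteratedDeriv n (fun y => ∫ t in Ioi (0:ℝ), K t * exp (-y*t))
        =ᶠ[nhds x] (fun y => ∫ t in Ioi (0:ℝ), K t * (-t)^n * exp (-y*t)) := by
      filter_upwards [isOpen_Ioi.mem_nhds hx] with y hy
      exact ih hy
    rw [hev.deriv_eq]
    exact (hasDerivAt_Fn hK hC n hx).deriv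

theorem theta_diff_completely_monotonic (p q : ℝ) (hp0 : 0 < p) (hp1 : p ≤ 1)
    (hq : q ≤ 1) (n : ℕ) (x : ℝ) (hx : 0 < x) :
    0 ≤ (-1 : ℝ) ^ n * iteratedDeriv n (fun y : ℝ =>
      (∫ t in Set.Ioi (0 : ℝ),
          (1 / (Real.exp t - 1) - 1 / t + 1 / 2) * (Real.exp (-(p * y) * t) / t)) -
        q * ∫ t in Set.Ioi (0 : ℝ),
          (1 / (Real.exp t - 1) - 1 / t + 1 / 2) * (Real.exp (-y * t) / t)) x := by
  set K : ℝ → ℝ := fun t => (dlt (t/p) - q * dlt t)/t with hKdef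
  set C : ℝ := 1/(4*p) + |q|/4 with hCdef
  have cdlt : ContinuousOn dlt (Ioi 0) := fun s hs =>
    (dlt_hasDerivAt hs).differentiableAt.continuousAt.continuousWithinAt
  have hmaps : Set.MapsTo (fun t : ℝ => t/p) (Ioi 0) (Ioi 0) :=
    fun t ht => mem_Ioi.2 (div_pos ht hp0)
  have hK : ContinuousOn K (Ioi 0) := by
    refine ContinuousOn.div ?_ continuousOn_id (fun t ht => ne_of_gt ht)
    exact (cdlt.comp (continuousOn_id.div_const p) hmaps).sub (continuousOn_const.mul cdlt)
  have hdltp : ∀ t ∈ Ioi (0:ℝ), 0 < t/p := fun t ht => div_pos ht hp0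
  have hC : ∀ t ∈ Ioi (0:ℝ), |K t| ≤ C := by
    intro t ht
    have ht0 : (0:ℝ) < t := ht
    have h1 : dlt (t/p) ≤ t/p/4 := dlt_le (hdltp t ht)
    have h2 : dlt t ≤ t/4 := dlt_le ht0
    have h3 : 0 ≤ dlt (t/p) := dlt_nonneg (hdltp t ht)
    have h4 : 0 ≤ dlt t := dlt_nonneg ht0
    rw [hKdef]
    simp only [abs_div, abs_of_pos ht0]
    rw [div_le_iff₀ ht0]
    have habs : |dlt (t/p) - q * dlt t| ≤ dlt (t/p) + |q| * dlt t := by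
      calc |dlt (t/p) - q * dlt t| ≤ |dlt (t/p)| + |q * dlt t| := abs_sub _ _
        _ = dlt (t/p) + |q| * dlt t := by rw [abs_of_nonneg h3, abs_mul, abs_of_nonneg h4]
    have hb1 : dlt (t/p) ≤ t/(4*p) := by
      calc dlt (t/p) ≤ t/p/4 := h1
        _ = t/(4*p) := by ring
    have hb2 : |q| * dlt t ≤ |q| * (t/4) := mul_le_mul_of_nonneg_left h2 (abs_nonneg q)
    calc |dlt (t/p) - q * dlt t| ≤ t/(4*p) + |q| * (t/4) := by linarith
      _ = C * t := by rw [hCdef]; field_simp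
  have hKnn : ∀ t ∈ Ioi (0:ℝ), 0 ≤ K t := by
    intro t ht
    have ht0 : (0:ℝ) < t := ht
    have hmono : dlt t ≤ dlt (t/p) := by
      have htp : t ≤ t/p := by
        rw [le_div_iff₀ hp0]
        calc t * p ≤ t * 1 := mul_le_mul_of_nonneg_left hp1 ht0.le
          _ = t := mul_one t
      exact dlt_mono.monotoneOn ht (hdltp t ht) htp
    have h4 : 0 ≤ dlt t := dlt_nonneg ht0
    have : q * dlt t ≤ dlt t := by
      calc q * dlt t ≤ 1 * dlt t := mul_le_mul_of_nonneg_right hq h4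
        _ = dlt t := one_mul _
    exact div_nonneg (by linarith) ht0.le
  -- integrability of the pieces
  have hK1 : ContinuousOn (fun t : ℝ => dlt (t/p)/t) (Ioi 0) :=
    (cdlt.comp (continuousOn_id.div_const p) hmaps).div continuousOn_id (fun t ht => ne_of_gt ht)
  have hK2 : ContinuousOn (fun t : ℝ => dlt t/t) (Ioi 0) :=
    cdlt.div continuousOn_id (fun t ht => ne_of_gt ht)
  have hC1 : ∀ t ∈ Ioi (0:ℝ), |dlt (t/p)/t| ≤ 1/(4*p) := by
    intro t ht
    have ht0 : (0:ℝ) < t := ht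
    rw [abs_div, abs_of_pos ht0, abs_of_nonneg (dlt_nonneg (hdltp t ht)), div_le_iff₀ ht0]
    calc dlt (t/p) ≤ t/p/4 := dlt_le (hdltp t ht)
      _ = 1/(4*p) * t := by rw [div_div, mul_comm p 4, one_div, inv_mul_eq_div]
  have hC2 : ∀ t ∈ Ioi (0:ℝ), |dlt t/t| ≤ 1/4 := by
    intro t ht
    have ht0 : (0:ℝ) < t := ht
    rw [abs_div, abs_of_pos ht0, abs_of_nonneg (dlt_nonneg ht0), div_le_iff₀ ht0]
    calc dlt t ≤ t/4 := dlt_le ht0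
      _ = 1/4 * t := by ring
  have int1 : ∀ {y : ℝ}, 0 < y → IntegrableOn (fun t : ℝ => dlt (t/p)/t * exp (-y*t)) (Ioi 0) := by
    intro y hy
    exact (integrable_aux hK1 hC1 0 hy).congr_fun (fun t ht => by simp) measurableSet_Ioi
  have int2 : ∀ {y : ℝ}, 0 < y → IntegrableOn (fun t : ℝ => q * (dlt t/t * exp (-y*t))) (Ioi 0) := by
    intro y hy
    exact ((integrable_aux hK2 hC2 0 hy).congr_fun (fun t ht => by simp) measurableSet_Ioi).const_mul q
  -- the function agrees with the Laplace transform of K on Ioi 0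
  have heqF : ∀ y ∈ Ioi (0:ℝ), (∫ t in Set.Ioi (0 : ℝ),
          (1 / (Real.exp t - 1) - 1 / t + 1 / 2) * (Real.exp (-(p * y) * t) / t)) -
        q * (∫ t in Set.Ioi (0 : ℝ),
          (1 / (Real.exp t - 1) - 1 / t + 1 / 2) * (Real.exp (-y * t) / t))
      = ∫ t in Ioi (0:ℝ), K t * exp (-y*t) := by
    intro y hy
    have hy0 : (0:ℝ) < y := hy
    have step1 : (∫ t in Set.Ioi (0 : ℝ),
        (1 / (Real.exp t - 1) - 1 / t + 1 / 2) * (Real.exp (-(p * y) * t) / t))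
        = ∫ t in Ioi (0:ℝ), dlt (t/p)/t * exp (-y*t) := by
      have hcv := integral_comp_mul_left_Ioi
        (g := fun u => p * (dlt (u/p)/u * exp (-y*u))) 0 hp0
      simp only [mul_zero] at hcv
      have lhs_eq : (∫ t in Set.Ioi (0 : ℝ),
          (1 / (Real.exp t - 1) - 1 / t + 1 / 2) * (Real.exp (-(p * y) * t) / t))
          = ∫ t in Ioi (0:ℝ), (fun u => p * (dlt (u/p)/u * exp (-y*u))) (p * t) := by
        refine setIntegral_congr_fun measurableSet_Ioi (fun t ht => ?_)
        have ht0 : (0:ℝ) < t := ht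
        have hpt : p * t / p = t := by field_simp
        simp only [hpt]
        rw [show -y * (p*t) = -(p*y)*t by ring]
        unfold dlt
        field_simp
      rw [lhs_eq, hcv, smul_eq_mul, integral_const_mul]
      rw [← mul_assoc, inv_mul_cancel₀ (ne_of_gt hp0), one_mul]
    have step2 : (∫ t in Set.Ioi (0 : ℝ),
        (1 / (Real.exp t - 1) - 1 / t + 1 / 2) * (Real.exp (-y * t) / t))
        = ∫ t in Ioi (0:ℝ), dlt t/t * exp (-y*t) := by
      refine setIntegral_congr_fun measurableSet_Ioi (fun t ht => ?_)
      unfold dlt; ring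
    rw [step1, step2, ← integral_const_mul, ← integral_sub (int1 hy0) (int2 hy0)]
    refine setIntegral_congr_fun measurableSet_Ioi (fun t ht => ?_)
    rw [hKdef]
    ring
  have hev : (fun y : ℝ =>
      (∫ t in Set.Ioi (0 : ℝ),
          (1 / (Real.exp t - 1) - 1 / t + 1 / 2) * (Real.exp (-(p * y) * t) / t)) -
        q * ∫ t in Set.Ioi (0 : ℝ),
          (1 / (Real.exp t - 1) - 1 / t + 1 / 2) * (Real.exp (-y * t) / t))
      =ᶠ[nhds x] (fun y => ∫ t in Ioi (0:ℝ), K t * exp (-y*t)) := by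
    filter_upwards [isOpen_Ioi.mem_nhds hx] with y hy
    exact heqF y hy
  rw [hev.iteratedDeriv_eq n, iteratedDeriv_F0 hK hC n hx, ← integral_const_mul]
  refine setIntegral_nonneg measurableSet_Ioi (fun t ht => ?_)
  have ht0 : (0:ℝ) < t := ht
  have hpow : (-1:ℝ)^n * (-1:ℝ)^n = 1 := by rw [← mul_pow]; norm_num
  have heq2 : (-1:ℝ)^n * (K t * (-t)^n * exp (-x*t))
      = ((-1:ℝ)^n * (-1:ℝ)^n) * (K t * t^n * exp (-x*t)) := by
    rw [show (-t:ℝ) = (-1)*t by ring, mul_pow]; ring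
  rw [heq2, hpow, one_mul]
  have := hKnn t ht
  positivity
end

section
/- Let θ(x) = ln Γ(x) − (x − 1/2)ln x + x − (1/2)ln(2π) be the remainder of Binet's first formula. Then θ is sub-additive on (0, ∞): θ(x + y) ≤ θ(x) + θ(y) for all x, y > 0, and −θ is star-shaped: τ·θ(x) ≤ θ(τx) for all x > 0 and 0 < τ < 1. -/
open Real Filter Topology Finset

noncomputable def th (x : ℝ) : ℝ :=
  Real.log (Real.Gamma x) - (x - 1 / 2) * Real.log x + x - 1 / 2 * Real.log (2 * Real.pi)

noncomputable def gg (x : ℝ) : ℝ := (x + 1 / 2) * (Real.log (x + 1) - Real.log x) - 1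

lemma log_lb {u : ℝ} (hu : 0 < u) : 2 * u / (2 + u) < Real.log (1 + u) := by
  have key : StrictMonoOn (fun u : ℝ => Real.log (1 + u) - 2 * u / (2 + u)) (Set.Ici 0) := by
    refine strictMonoOn_of_deriv_pos (convex_Ici 0) ?_ ?_
    · refine ContinuousOn.sub ?_ ?_
      · refine ContinuousOn.log (by fun_prop) fun x hx => ?_
        have : (0:ℝ) ≤ x := hx
        positivity
      · refine ContinuousOn.div (by fun_prop) (by fun_prop) fun x hx => ?_
        have : (0:ℝ) ≤ x := hx
        positivity
    · intro v hv
      rw [interior_Ici] at hv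
      have hv0 : (0:ℝ) < v := hv
      have h1 : HasDerivAt (fun u : ℝ => Real.log (1 + u)) (1 / (1 + v)) v := by
        simpa using ((hasDerivAt_id v).const_add 1).log (by positivity)
      have h2 : HasDerivAt (fun u : ℝ => 2 * u / (2 + u))
          ((2 * 1 * (2 + v) - 2 * id v * 1) / (2 + v) ^ 2) v := by
        exact ((hasDerivAt_id v).const_mul 2).div ((hasDerivAt_id v).const_add 2) (by positivity)
      rw [show (fun u : ℝ => Real.log (1 + u) - 2 * u / (2 + u)) =
          (fun u : ℝ => Real.log (1 + u)) - (fun u : ℝ => 2 * u / (2 + u)) from rfl, (h1.sub h2).deriv]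
      simp only [id_eq]
      rw [sub_pos, div_lt_div_iff₀ (by positivity) (by positivity)]
      nlinarith
  have h := key (Set.self_mem_Ici) (Set.mem_Ici.2 hu.le) hu
  simpa using h

lemma log_ub {u : ℝ} (hu : 0 < u) : Real.log (1 + u) < u * (2 + u) / (2 * (1 + u)) := by
  have key : StrictMonoOn (fun u : ℝ => u * (2 + u) / (2 * (1 + u)) - Real.log (1 + u))
      (Set.Ici 0) := by
    refine strictMonoOn_of_deriv_pos (convex_Ici 0) ?_ ?_
    · refine ContinuousOn.sub ?_ ?_
      · refine ContinuousOn.div (by fun_prop) (by fun_prop) fun x hx => ?_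
        have : (0:ℝ) ≤ x := hx
        positivity
      · refine ContinuousOn.log (by fun_prop) fun x hx => ?_
        have : (0:ℝ) ≤ x := hx
        positivity
    · intro v hv
      rw [interior_Ici] at hv
      have hv0 : (0:ℝ) < v := hv
      have h1 : HasDerivAt (fun u : ℝ => Real.log (1 + u)) (1 / (1 + v)) v := by
        simpa using ((hasDerivAt_id v).const_add 1).log (by positivity)
      have h2 : HasDerivAt (fun u : ℝ => u * (2 + u) / (2 * (1 + u)))
          (((1 * (2 + v) + v * 1) * (2 * (1 + v)) - v * (2 + v) * (2 * 1)) /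
            (2 * (1 + v)) ^ 2) v := by
        exact (((hasDerivAt_id v).mul ((hasDerivAt_id v).const_add 2)).div
          (((hasDerivAt_id v).const_add 1).const_mul 2) (by positivity))
      rw [show (fun u : ℝ => u * (2 + u) / (2 * (1 + u)) - Real.log (1 + u)) =
          (fun u : ℝ => u * (2 + u) / (2 * (1 + u))) - (fun u : ℝ => Real.log (1 + u)) from rfl,
        (h2.sub h1).deriv]
      rw [sub_pos, div_lt_div_iff₀ (by positivity) (by positivity)]
      nlinarith [mul_pos hv0 hv0, mul_pos (mul_pos hv0 hv0) hv0]
  have h := key (Set.self_mem_Ici) (Set.mem_Ici.2 hu.le) hu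
  simp only [zero_mul, zero_div, add_zero, mul_zero, zero_add, Real.log_one, sub_zero] at h
  linarith [h]

lemma log_one_add_inv {x : ℝ} (hx : 0 < x) :
    Real.log (x + 1) - Real.log x = Real.log (1 + 1 / x) := by
  rw [← Real.log_div (by positivity) hx.ne']
  congr 1
  field_simp

lemma gg_pos {x : ℝ} (hx : 0 < x) : 0 < gg x := by
  have h := log_lb (u := 1 / x) (by positivity)
  have hkey : 2 * (1 / x) / (2 + 1 / x) = 1 / (x + 1 / 2) := by
    rw [div_eq_div_iff (by positivity) (by positivity)]; field_simp
  rw [hkey] at h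
  have h2 : (x + 1 / 2) * (1 / (x + 1 / 2)) < (x + 1 / 2) * Real.log (1 + 1 / x) :=
    mul_lt_mul_of_pos_left h (by positivity)
  rw [mul_one_div_cancel (by positivity)] at h2
  unfold gg
  rw [log_one_add_inv hx]
  linarith

lemma gg_anti {x y : ℝ} (hx : 0 < x) (hxy : x ≤ y) : gg y ≤ gg x := by
  rcases eq_or_lt_of_le hxy with rfl | hlt
  · exact le_rfl
  have key : StrictAntiOn gg (Set.Ioi 0) := by
    refine strictAntiOn_of_deriv_neg (convex_Ioi 0) ?_ ?_
    · unfold gg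
      refine ContinuousOn.sub (ContinuousOn.mul (by fun_prop) (ContinuousOn.sub ?_ ?_)) (by fun_prop)
      · refine ContinuousOn.log (by fun_prop) fun z hz => ?_
        have : (0:ℝ) < z := hz
        positivity
      · refine ContinuousOn.log (by fun_prop) fun z hz => ?_
        have : (0:ℝ) < z := hz
        exact this.ne'
    · intro v hv
      rw [interior_Ioi] at hv
      have hv0 : (0:ℝ) < v := hv
      have h1 : HasDerivAt (fun u : ℝ => Real.log (u + 1)) (1 / (v + 1)) v := by
        simpa using ((hasDerivAt_id v).add_const 1).log (by positivity)
      have h2 : HasDerivAt Real.log v⁻¹ v := Real.hasDerivAt_log hv0.ne'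
      have h3 : HasDerivAt gg
          (1 * (Real.log (v + 1) - Real.log v) + (v + 1 / 2) * (1 / (v + 1) - v⁻¹)) v := by
        exact (((hasDerivAt_id v).add_const (1/2 : ℝ)).mul (h1.sub h2)).sub_const 1
      rw [h3.deriv]
      have hub := log_ub (u := 1 / v) (by positivity)
      have heq : (1 / v) * (2 + 1 / v) / (2 * (1 + 1 / v)) = -((v + 1 / 2) * (1 / (v + 1) - v⁻¹)) := by
        field_simp
        ring
      rw [heq] at hub
      rw [← log_one_add_inv hv0] at hub
      linarith
  exact (key (Set.mem_Ioi.2 hx) (Set.mem_Ioi.2 (hx.trans hlt)) hlt).le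

lemma th_rec {x : ℝ} (hx : 0 < x) : th x = gg x + th (x + 1) := by
  unfold th gg
  rw [Real.Gamma_add_one hx.ne', Real.log_mul hx.ne' (Real.Gamma_pos_of_pos hx).ne']
  ring

lemma th_telescope {x : ℝ} (hx : 0 < x) (N : ℕ) :
    th x - th (x + N) = ∑ n ∈ Finset.range N, gg (x + n) := by
  induction N with
  | zero => simp
  | succ N ih =>
    rw [Finset.sum_range_succ, ← ih]
    have h : th (x + N) = gg (x + N) + th (x + N + 1) := th_rec (by positivity)
    push_cast
    rw [show x + (N + 1 : ℝ) = x + N + 1 by ring]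
    linarith

lemma tendsto_log_one_add_div_nat (c : ℝ) :
    Tendsto (fun k : ℕ => Real.log (1 + c / k)) atTop (𝓝 0) := by
  have h : Tendsto (fun k : ℕ => 1 + c / (k:ℝ)) atTop (𝓝 1) := by
    simpa using (tendsto_const_nhds (x := (1:ℝ))).add (tendsto_const_div_atTop_nhds_zero_nat c)
  have h2 := (Real.continuousAt_log one_ne_zero).tendsto.comp h
  simpa [Function.comp_def] using h2

lemma tendsto_th_frac {t : ℝ} (ht0 : 0 ≤ t) (ht1 : t < 1) :
    Tendsto (fun k : ℕ => th (k + t)) atTop (𝓝 0) := by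
  set S : ℕ → ℝ := fun k => Real.log (Stirling.stirlingSeq k) - 1 / 2 * Real.log π with hS
  set U : ℕ → ℝ := fun k =>
    Real.log (Real.Gamma k) + t * Real.log k - ((k:ℝ) + t - 1 / 2) * Real.log ((k:ℝ) + t)
      + ((k:ℝ) + t) - 1 / 2 * Real.log (2 * π) with hU
  set L : ℕ → ℝ := fun k => U k + t * (Real.log ((k:ℝ) + t - 1) - Real.log k) with hL
  have hSlim : Tendsto S atTop (𝓝 0) := by
    have h0 : Tendsto (fun k : ℕ => Real.log (Stirling.stirlingSeq k)) atTop
        (𝓝 (Real.log (Real.sqrt π))) :=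
      ((Real.continuousAt_log (Real.sqrt_pos.2 Real.pi_pos).ne').tendsto).comp
        Stirling.tendsto_stirlingSeq_sqrt_pi
    rw [Real.log_sqrt Real.pi_pos.le] at h0
    have h1 := h0.sub (tendsto_const_nhds (x := 1 / 2 * Real.log π))
    rw [show Real.log π / 2 - 1 / 2 * Real.log π = 0 by ring] at h1
    exact h1
  have hAlim : Tendsto (fun k : ℕ => ((k:ℝ) + t - 1 / 2) * Real.log (1 + t / k)) atTop (𝓝 t) := by
    have h1 : Tendsto (fun k : ℕ => (k:ℝ) * Real.log (1 + t / k)) atTop (𝓝 t) :=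
      (Real.tendsto_mul_log_one_add_div_atTop t).comp tendsto_natCast_atTop_atTop
    have h2 : Tendsto (fun k : ℕ => (t - 1 / 2) * Real.log (1 + t / k)) atTop (𝓝 0) := by
      simpa using (tendsto_log_one_add_div_nat t).const_mul (t - 1 / 2)
    have h3 := h1.add h2
    rw [add_zero] at h3
    exact h3.congr fun k => by ring
  have hUid : ∀ k : ℕ, 1 ≤ k →
      U k = S k + (t - ((k:ℝ) + t - 1 / 2) * Real.log (1 + t / k)) := by
    intro k hk
    have hk0 : (0:ℝ) < k := by exact_mod_cast hk
    have hfac := Stirling.log_stirlingSeq_formula k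
    have hG1 : Real.Gamma ((k:ℝ) + 1) = (k.factorial : ℝ) := by
      exact_mod_cast Real.Gamma_nat_eq_factorial k
    have hG2 : Real.Gamma ((k:ℝ) + 1) = k * Real.Gamma k := Real.Gamma_add_one hk0.ne'
    have hGpos : 0 < Real.Gamma (k:ℝ) := Real.Gamma_pos_of_pos hk0
    have hlogfac : Real.log (k.factorial : ℝ) = Real.log k + Real.log (Real.Gamma k) := by
      rw [← hG1, hG2, Real.log_mul hk0.ne' hGpos.ne']
    have e2k : Real.log (2 * (k:ℝ)) = Real.log 2 + Real.log k :=
      Real.log_mul two_ne_zero hk0.ne'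
    have eke : Real.log ((k:ℝ) / Real.exp 1) = Real.log k - 1 := by
      rw [Real.log_div hk0.ne' (Real.exp_ne_zero 1), Real.log_exp]
    have ekt : Real.log ((k:ℝ) + t) = Real.log k + Real.log (1 + t / k) := by
      rw [show (k:ℝ) + t = k * (1 + t / k) by field_simp,
        Real.log_mul hk0.ne' (by positivity)]
    have e2pi : Real.log (2 * π) = Real.log 2 + Real.log π :=
      Real.log_mul two_ne_zero Real.pi_ne_zero
    have eG : Real.log (Real.Gamma k) = Real.log (Stirling.stirlingSeq k)
        + 1 / 2 * (Real.log 2 + Real.log k) + (k:ℝ) * (Real.log k - 1) - Real.log k := by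
      rw [← e2k, ← eke]
      linarith [hfac, hlogfac]
    simp only [hU, hS]
    rw [ekt, e2pi, eG]
    ring
  have hUlim : Tendsto U atTop (𝓝 0) := by
    have heq : (fun k : ℕ => S k + (t - ((k:ℝ) + t - 1 / 2) * Real.log (1 + t / k)))
        =ᶠ[atTop] U := by
      filter_upwards [eventually_ge_atTop 1] with k hk using (hUid k hk).symm
    have h := hSlim.add ((tendsto_const_nhds (x := t)).sub hAlim)
    rw [show (0:ℝ) + (t - t) = 0 by ring] at h
    exact h.congr' heq
  have hLlim : Tendsto L atTop (𝓝 0) := by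
    have hdiff : Tendsto (fun k : ℕ => t * (Real.log ((k:ℝ) + t - 1) - Real.log k))
        atTop (𝓝 0) := by
      have heq : (fun k : ℕ => Real.log (1 + (t - 1) / k))
          =ᶠ[atTop] fun k : ℕ => Real.log ((k:ℝ) + t - 1) - Real.log k := by
        filter_upwards [eventually_ge_atTop 2] with k hk
        have h2k : (2:ℝ) ≤ k := by exact_mod_cast hk
        have hk0 : (0:ℝ) < k := by linarith
        have hkt1 : (0:ℝ) < (k:ℝ) + t - 1 := by linarith
        have hpos : (0:ℝ) < 1 + (t - 1) / k := by
          rw [show (1:ℝ) + (t - 1) / k = ((k:ℝ) + t - 1) / k by field_simp; ring]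
          positivity
        rw [show (k:ℝ) + t - 1 = k * (1 + (t - 1) / k) by field_simp; ring,
          Real.log_mul hk0.ne' hpos.ne']
        ring
      have h1 := (tendsto_log_one_add_div_nat (t - 1)).congr' heq
      simpa using h1.const_mul t
    simpa using hUlim.add hdiff
  refine tendsto_of_tendsto_of_tendsto_of_le_of_le' hLlim hUlim ?_ ?_
  · filter_upwards [eventually_ge_atTop 2] with k hk
    have h2k : (2:ℝ) ≤ k := by exact_mod_cast hk
    have hk0 : (0:ℝ) < k := by linarith
    have hkt1 : (0:ℝ) < (k:ℝ) + t - 1 := by linarith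
    have hkt : (0:ℝ) < (k:ℝ) + t := by linarith
    have hconv := Real.convexOn_log_Gamma.2 (Set.mem_Ioi.2 hkt1) (Set.mem_Ioi.2 hkt)
      ht0 (by linarith : (0:ℝ) ≤ 1 - t) (by ring : t + (1 - t) = 1)
    simp only [smul_eq_mul, Function.comp_apply] at hconv
    rw [show t * ((k:ℝ) + t - 1) + (1 - t) * ((k:ℝ) + t) = (k:ℝ) by ring] at hconv
    have hGkt1 : 0 < Real.Gamma ((k:ℝ) + t - 1) := Real.Gamma_pos_of_pos hkt1
    have hG4 : Real.log (Real.Gamma ((k:ℝ) + t)) =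
        Real.log ((k:ℝ) + t - 1) + Real.log (Real.Gamma ((k:ℝ) + t - 1)) := by
      have hGa := Real.Gamma_add_one hkt1.ne'
      rw [show ((k:ℝ) + t - 1) + 1 = (k:ℝ) + t by ring] at hGa
      rw [hGa, Real.log_mul hkt1.ne' hGkt1.ne']
    have hX : Real.log (Real.Gamma ((k:ℝ) + t - 1)) =
        Real.log (Real.Gamma ((k:ℝ) + t)) - Real.log ((k:ℝ) + t - 1) := by linarith
    rw [hX] at hconv
    have hkey : Real.log (Real.Gamma (k:ℝ)) + t * Real.log ((k:ℝ) + t - 1)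
        ≤ Real.log (Real.Gamma ((k:ℝ) + t)) := by nlinarith [hconv]
    simp only [hL, hU]
    unfold th
    linarith
  · filter_upwards [eventually_ge_atTop 1] with k hk
    have hk0 : (0:ℝ) < k := by exact_mod_cast hk
    have hGpos : 0 < Real.Gamma (k:ℝ) := Real.Gamma_pos_of_pos hk0
    have hconv := Real.convexOn_log_Gamma.2 (Set.mem_Ioi.2 hk0)
      (Set.mem_Ioi.2 (by linarith : (0:ℝ) < (k:ℝ) + 1))
      (by linarith : (0:ℝ) ≤ 1 - t) ht0 (by ring : (1 - t) + t = 1)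
    simp only [smul_eq_mul, Function.comp_apply] at hconv
    rw [show (1 - t) * (k:ℝ) + t * ((k:ℝ) + 1) = (k:ℝ) + t by ring] at hconv
    have hG3 : Real.log (Real.Gamma ((k:ℝ) + 1)) = Real.log k + Real.log (Real.Gamma k) := by
      rw [Real.Gamma_add_one hk0.ne', Real.log_mul hk0.ne' hGpos.ne']
    rw [hG3] at hconv
    have hkey : Real.log (Real.Gamma ((k:ℝ) + t))
        ≤ Real.log (Real.Gamma (k:ℝ)) + t * Real.log k := by nlinarith [hconv]
    simp only [hU]
    unfold th
    linarith

lemma tendsto_th_add_nat {x : ℝ} (hx : 0 < x) :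
    Tendsto (fun N : ℕ => th (x + N)) atTop (𝓝 0) := by
  have hfr := tendsto_th_frac (Int.fract_nonneg x) (Int.fract_lt_one x)
  have hfl : 0 ≤ ⌊x⌋ := Int.floor_nonneg.2 hx.le
  have hcomp := hfr.comp (tendsto_add_atTop_nat ⌊x⌋.toNat)
  refine hcomp.congr fun N => ?_
  simp only [Function.comp_apply]
  congr 1
  have h2 := Int.floor_add_fract x
  have h3 : ((⌊x⌋.toNat : ℕ) : ℝ) = (⌊x⌋ : ℝ) := by exact_mod_cast Int.toNat_of_nonneg hfl
  push_cast
  rw [h3]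
  linarith

lemma th_nonneg {x : ℝ} (hx : 0 < x) : 0 ≤ th x := by
  have h : Tendsto (fun N : ℕ => th x - th (x + N)) atTop (𝓝 (th x)) := by
    simpa using (tendsto_const_nhds (x := th x)).sub (tendsto_th_add_nat hx)
  refine ge_of_tendsto h (Eventually.of_forall fun N => ?_)
  rw [th_telescope hx N]
  exact Finset.sum_nonneg fun n _ => (gg_pos (by positivity)).le

lemma th_anti {x y : ℝ} (hx : 0 < x) (hxy : x ≤ y) : th y ≤ th x := by
  have hy : 0 < y := lt_of_lt_of_le hx hxy
  have h : Tendsto (fun N : ℕ => (th x - th (x + N)) - (th y - th (y + N))) atTop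
      (𝓝 (th x - th y)) := by
    have := ((tendsto_const_nhds (x := th x)).sub (tendsto_th_add_nat hx)).sub
      ((tendsto_const_nhds (x := th y)).sub (tendsto_th_add_nat hy))
    simpa using this
  have h0 : (0:ℝ) ≤ th x - th y := by
    refine ge_of_tendsto h (Eventually.of_forall fun N => ?_)
    rw [th_telescope hx N, th_telescope hy N, ← Finset.sum_sub_distrib]
    refine Finset.sum_nonneg fun n _ => ?_
    have := gg_anti (x := x + n) (y := y + n) (by positivity) (by linarith)
    linarith
  linarith

theorem theta_subadditive_and_star_shaped :
    (∀ x y : ℝ, 0 < x → 0 < y →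
      (fun z : ℝ => Real.log (Real.Gamma z) - (z - 1 / 2) * Real.log z + z -
          1 / 2 * Real.log (2 * Real.pi)) (x + y) ≤
        (fun z : ℝ => Real.log (Real.Gamma z) - (z - 1 / 2) * Real.log z + z -
          1 / 2 * Real.log (2 * Real.pi)) x +
        (fun z : ℝ => Real.log (Real.Gamma z) - (z - 1 / 2) * Real.log z + z -
          1 / 2 * Real.log (2 * Real.pi)) y) ∧
    (∀ x τ : ℝ, 0 < x → 0 < τ → τ < 1 →
      τ * ((fun z : ℝ => Real.log (Real.Gamma z) - (z - 1 / 2) * Real.log z + z -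
          1 / 2 * Real.log (2 * Real.pi)) x) ≤
        (fun z : ℝ => Real.log (Real.Gamma z) - (z - 1 / 2) * Real.log z + z -
          1 / 2 * Real.log (2 * Real.pi)) (τ * x)) := by
  constructor
  · intro x y hx hy
    have h1 : th (x + y) ≤ th x := th_anti hx (by linarith)
    have h2 : 0 ≤ th y := th_nonneg hy
    show th (x + y) ≤ th x + th y
    linarith
  · intro x τ hx hτ0 hτ1
    have hτx : 0 < τ * x := by positivity
    have h1 : th x ≤ th (τ * x) := th_anti hτx (by nlinarith)
    have h2 : 0 ≤ th x := th_nonneg hx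
    show τ * th x ≤ th (τ * x)
    nlinarith
end
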